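/- arXiv:2407.09664 — 3 statements merged into one kernel-verified Lean document; each statement's English description precedes it below -/
import Mathlib

section
/- Chatterjee's master lemma: under the exchangeable-pair setup, the moment generating function M(λ) = E[exp(λ f(X))] is differentiable at every λ ∈ ℝ and its derivative satisfies M'(λ) ≤ |λ| · E[ exp(λ f(X)) · V ] for all λ ∈ ℝ. -/
open MeasureTheory
set_option maxHeartbeats 1000000

lemma abs_le_exp_add_exp_neg (x : ℝ) : |x| ≤ Real.exp x + Real.exp (-x) := by
  rcases abs_cases x with ⟨h, _⟩ | ⟨h, _⟩ <;>
    nlinarith [Real.add_one_le_exp x, Real.add_one_le_exp (-x), Real.exp_pos x, Real.exp_pos (-x)]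

lemma sq_le_exp_add (x : ℝ) : x ^ 2 ≤ Real.exp (2 * x) + Real.exp (-(2 * x)) + 2 := by
  have h := abs_le_exp_add_exp_neg x
  have h1 : Real.exp x * Real.exp x = Real.exp (2 * x) := by rw [← Real.exp_add]; ring_nf
  have h2 : Real.exp (-x) * Real.exp (-x) = Real.exp (-(2 * x)) := by rw [← Real.exp_add]; ring_nf
  have h3 : Real.exp x * Real.exp (-x) = 1 := by rw [← Real.exp_add]; simp
  nlinarith [sq_abs x, abs_nonneg x, Real.exp_pos x, Real.exp_pos (-x)]

lemma two_exp_sub_le {t : ℝ} (ht : 0 ≤ t) : 2 * (Real.exp t - 1) ≤ t * (Real.exp t + 1) := by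
  set g : ℝ → ℝ := fun s => s * Real.exp s + s - 2 * Real.exp s + 2 with hg
  have hd : ∀ s : ℝ, HasDerivAt g (s * Real.exp s + 1 - Real.exp s) s := by
    intro s
    have h1 : HasDerivAt (fun s : ℝ => s * Real.exp s) (1 * Real.exp s + s * Real.exp s) s :=
      (hasDerivAt_id s).mul (Real.hasDerivAt_exp s)
    have h2 : HasDerivAt (fun s : ℝ => s * Real.exp s + s)
        (1 * Real.exp s + s * Real.exp s + 1) s := h1.add (hasDerivAt_id s)
    have h3 : HasDerivAt (fun s : ℝ => 2 * Real.exp s) (2 * Real.exp s) s :=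
      (Real.hasDerivAt_exp s).const_mul 2
    have h4 := (h2.sub h3).add_const 2
    refine h4.congr_deriv ?_
    ring
  have hmono : MonotoneOn g (Set.Ici (0:ℝ)) := by
    apply monotoneOn_of_deriv_nonneg (convex_Ici 0)
    · exact (continuous_id.mul Real.continuous_exp |>.add continuous_id |>.sub
        (continuous_const.mul Real.continuous_exp) |>.add continuous_const).continuousOn
    · intro s _
      exact (hd s).differentiableAt.differentiableWithinAt
    · intro s _
      rw [(hd s).deriv]
      have h5 : Real.exp s * Real.exp (-s) = 1 := by rw [← Real.exp_add]; simp
      nlinarith [Real.add_one_le_exp (-s), Real.exp_pos s, Real.exp_pos (-s)]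
  have h0 := hmono (Set.self_mem_Ici) (Set.mem_Ici.2 ht) ht
  simp only [hg] at h0
  simp only [Real.exp_zero] at h0
  nlinarith [h0]

lemma abs_exp_sub_exp_le (a b : ℝ) :
    |Real.exp a - Real.exp b| ≤ |a - b| * (Real.exp a + Real.exp b) / 2 := by
  wlog h : b ≤ a generalizing a b
  · have := this b a (le_of_not_ge h)
    rw [abs_sub_comm, abs_sub_comm b a] at this
    linarith [this]
  have ht : 0 ≤ a - b := sub_nonneg.2 h
  have h2 := two_exp_sub_le ht
  have hb := Real.exp_pos b
  have he : Real.exp (a - b) * Real.exp b = Real.exp a := by rw [← Real.exp_add]; ring_nf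
  have h3 : Real.exp b ≤ Real.exp a := Real.exp_le_exp.2 h
  rw [abs_of_nonneg (sub_nonneg.2 h3), abs_of_nonneg ht]
  nlinarith [h2, hb, he]

/-- domination: `|(y-y')g| e^{ly}` by integrable exponentials plus `g²`. -/
lemma key_dom (l y y' g : ℝ) :
    |(y - y') * g| * Real.exp (l * y) ≤
      (Real.exp ((2*l+2) * y) + Real.exp ((2*l-2) * y) + 2 * Real.exp (2*l*y)) +
      ((Real.exp (4 * y') + Real.exp (4*l*y)) / 2 + (Real.exp (-(4 * y')) + Real.exp (4*l*y)) / 2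
        + 2 * Real.exp (2*l*y)) + g ^ 2 / 2 := by
  set u := Real.exp (l * y) with hu
  have hupos : 0 < u := Real.exp_pos _
  have hu2 : u * u = Real.exp (2*l*y) := by rw [hu, ← Real.exp_add]; ring_nf
  have hu4 : Real.exp (2*l*y) * Real.exp (2*l*y) = Real.exp (4*l*y) := by
    rw [← Real.exp_add]; ring_nf
  have hA1 : Real.exp (2 * y) * Real.exp (2*l*y) = Real.exp ((2*l+2) * y) := by
    rw [← Real.exp_add]; ring_nf
  have hA2 : Real.exp (-(2 * y)) * Real.exp (2*l*y) = Real.exp ((2*l-2) * y) := by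
    rw [← Real.exp_add]; ring_nf
  have hB1 : Real.exp (2 * y') * Real.exp (2 * y') = Real.exp (4 * y') := by
    rw [← Real.exp_add]; ring_nf
  have hB2 : Real.exp (-(2 * y')) * Real.exp (-(2 * y')) = Real.exp (-(4 * y')) := by
    rw [← Real.exp_add]; ring_nf
  have hy := sq_le_exp_add y
  have hy' := sq_le_exp_add y'
  have step1 : |(y - y') * g| * u ≤ ((y - y') * u) ^ 2 / 2 + g ^ 2 / 2 := by
    have h1 : |(y - y') * g| * u = |(y - y') * u| * |g| := by
      rw [abs_mul, abs_mul, abs_of_pos hupos]; ring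
    rw [h1]
    nlinarith [sq_nonneg (|(y - y') * u| - |g|), sq_abs ((y - y') * u), sq_abs g,
      abs_nonneg ((y - y') * u), abs_nonneg g]
  have step2 : ((y - y') * u) ^ 2 ≤ 2 * y ^ 2 * (u*u) + 2 * y' ^ 2 * (u*u) := by
    nlinarith [sq_nonneg ((y + y') * u), mul_pos hupos hupos]
  have step3 : y ^ 2 * (u*u) ≤ Real.exp ((2*l+2) * y) + Real.exp ((2*l-2) * y)
      + 2 * Real.exp (2*l*y) := by
    rw [hu2, ← hA1, ← hA2]
    nlinarith [hy, Real.exp_pos (2*l*y)]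
  have step4 : y' ^ 2 * (u*u) ≤ (Real.exp (4 * y') + Real.exp (4*l*y)) / 2 +
      (Real.exp (-(4 * y')) + Real.exp (4*l*y)) / 2 + 2 * Real.exp (2*l*y) := by
    rw [hu2]
    have hvpos : (0:ℝ) < Real.exp (2*l*y) := Real.exp_pos _
    have hcv : Real.exp (2*y') * Real.exp (2*l*y) ≤
        (Real.exp (4 * y') + Real.exp (4*l*y)) / 2 := by
      rw [← hB1, ← hu4]
      nlinarith [sq_nonneg (Real.exp (2*y') - Real.exp (2*l*y))]
    have hdv : Real.exp (-(2*y')) * Real.exp (2*l*y) ≤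
        (Real.exp (-(4 * y')) + Real.exp (4*l*y)) / 2 := by
      rw [← hB2, ← hu4]
      nlinarith [sq_nonneg (Real.exp (-(2*y')) - Real.exp (2*l*y))]
    have hmul := mul_le_mul_of_nonneg_right hy' hvpos.le
    nlinarith [hmul, hcv, hdv]
  linarith [step1, step2, step3, step4]

/-- the pointwise key inequality for step D -/
lemma key_pt (l y y' g : ℝ) :
    (Real.exp (l * y) - Real.exp (l * y')) * g ≤
      |l| / 2 * (Real.exp (l * y) * |(y - y') * g| + Real.exp (l * y') * |(y - y') * g|) := by
  have h := abs_exp_sub_exp_le (l * y) (l * y')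
  have h0 : (Real.exp (l * y) - Real.exp (l * y')) * g ≤
      |Real.exp (l * y) - Real.exp (l * y')| * |g| := by
    calc (Real.exp (l * y) - Real.exp (l * y')) * g
        ≤ |(Real.exp (l * y) - Real.exp (l * y')) * g| := le_abs_self _
      _ = |Real.exp (l * y) - Real.exp (l * y')| * |g| := abs_mul _ _
  have h1 : |l * y - l * y'| = |l| * |y - y'| := by rw [← abs_mul]; ring_nf
  have h2 : |(y - y') * g| = |y - y'| * |g| := abs_mul _ _
  have h4 := mul_le_mul_of_nonneg_right h (abs_nonneg g)
  rw [h1] at h4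
  calc (Real.exp (l * y) - Real.exp (l * y')) * g
      ≤ |Real.exp (l * y) - Real.exp (l * y')| * |g| := h0
    _ ≤ |l| * |y - y'| * (Real.exp (l * y) + Real.exp (l * y')) / 2 * |g| := h4
    _ = |l| / 2 * (Real.exp (l * y) * (|y - y'| * |g|)
        + Real.exp (l * y') * (|y - y'| * |g|)) := by ring
    _ = |l| / 2 * (Real.exp (l * y) * |(y - y') * g|
        + Real.exp (l * y') * |(y - y') * g|) := by rw [h2]


/-- Chatterjee's master lemma for exchangeable pairs: the moment generating function
`M(λ) = E[exp(λ f(X))]` is differentiable everywhere and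
`M'(λ) ≤ |λ| · E[exp(λ f(X)) · V]`. -/
theorem chatterjee_master_lemma
    {Ω 𝒳 : Type*} [MeasurableSpace Ω] [MeasurableSpace 𝒳]
    (P : Measure Ω) [IsProbabilityMeasure P]
    (X X' : Ω → 𝒳) (hX : Measurable X) (hX' : Measurable X')
    (hexch : P.map (fun ω => (X ω, X' ω)) = P.map (fun ω => (X' ω, X ω)))
    (f : 𝒳 → ℝ) (hf : Measurable f)
    (hmean : ∫ ω, f (X ω) ∂P = 0)
    (hL2 : Integrable (fun ω => (f (X ω)) ^ 2) P)
    (hmgf : ∀ t : ℝ, Integrable (fun ω => Real.exp (t * f (X ω))) P)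
    (F : 𝒳 → 𝒳 → ℝ) (hFmeas : Measurable fun p : 𝒳 × 𝒳 => F p.1 p.2)
    (hFanti : ∀ x y, F x y = -F y x)
    (hFL2 : Integrable (fun ω => (F (X ω) (X' ω)) ^ 2) P)
    (hFcond : MeasureTheory.condExp (MeasurableSpace.comap X inferInstance) P
        (fun ω => F (X ω) (X' ω)) =ᵐ[P] fun ω => f (X ω))
    (V : Ω → ℝ)
    (hV : V = fun ω => (1 / 2 : ℝ) *
      (MeasureTheory.condExp (MeasurableSpace.comap X inferInstance) P
        (fun ω' => |(f (X ω') - f (X' ω')) * F (X ω') (X' ω')|) ω)) :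
    ∀ l : ℝ,
      DifferentiableAt ℝ (fun t => ∫ ω, Real.exp (t * f (X ω)) ∂P) l ∧
      deriv (fun t => ∫ ω, Real.exp (t * f (X ω)) ∂P) l
        ≤ |l| * ∫ ω, Real.exp (l * f (X ω)) * V ω ∂P := by
  intro l
  -- measurability basics
  have hYm : Measurable (fun ω => f (X ω)) := hf.comp hX
  have hY'm : Measurable (fun ω => f (X' ω)) := hf.comp hX'
  have hGm : Measurable (fun ω => F (X ω) (X' ω)) := hFmeas.comp (hX.prodMk hX')
  have hpair : Measurable (fun ω => (X ω, X' ω)) := hX.prodMk hX'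
  have hpair' : Measurable (fun ω => (X' ω, X ω)) := hX'.prodMk hX
  -- the sub-σ-algebra
  have hm := hX.comap_le
  haveI hsf : SigmaFinite (P.trim hm) := by
    have := isFiniteMeasure_trim (μ := P) hm
    infer_instance
  -- marginals agree
  have hmarg : P.map X = P.map X' := by
    have h1 : (P.map (fun ω => (X ω, X' ω))).map Prod.fst = P.map X := by
      rw [Measure.map_map measurable_fst hpair]; rfl
    have h2 : (P.map (fun ω => (X' ω, X ω))).map Prod.fst = P.map X' := by
      rw [Measure.map_map measurable_fst hpair']; rfl
    rw [← h1, hexch, h2]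
  -- swap identities
  have hswap_eq : ∀ (g : 𝒳 × 𝒳 → ℝ), Measurable g →
      ∫ ω, g (X ω, X' ω) ∂P = ∫ ω, g (X' ω, X ω) ∂P := by
    intro g hg
    have e1 : ∫ p, g p ∂(P.map (fun ω => (X ω, X' ω))) = ∫ ω, g (X ω, X' ω) ∂P :=
      integral_map hpair.aemeasurable hg.aestronglyMeasurable
    have e2 : ∫ p, g p ∂(P.map (fun ω => (X' ω, X ω))) = ∫ ω, g (X' ω, X ω) ∂P :=
      integral_map hpair'.aemeasurable hg.aestronglyMeasurable
    rw [← e1, ← e2, hexch]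
  have hswap_int : ∀ (g : 𝒳 × 𝒳 → ℝ), Measurable g →
      Integrable (fun ω => g (X' ω, X ω)) P → Integrable (fun ω => g (X ω, X' ω)) P := by
    intro g hg h
    have h2 : Integrable g (P.map (fun ω => (X' ω, X ω))) :=
      (integrable_map_measure hg.aestronglyMeasurable hpair'.aemeasurable).mpr h
    rw [← hexch] at h2
    exact (integrable_map_measure hg.aestronglyMeasurable hpair.aemeasurable).mp h2
  -- mgf of the X' marginal
  have hmgf' : ∀ t : ℝ, Integrable (fun ω => Real.exp (t * f (X' ω))) P := by
    intro t
    have hgm : Measurable (fun x => Real.exp (t * f x)) := (hf.const_mul t).exp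
    have h : Integrable (fun x => Real.exp (t * f x)) (P.map X) :=
      (integrable_map_measure hgm.aestronglyMeasurable hX.aemeasurable).mpr (hmgf t)
    rw [hmarg] at h
    exact (integrable_map_measure hgm.aestronglyMeasurable hX'.aemeasurable).mp h
  have hL2' : Integrable (fun ω => (f (X' ω)) ^ 2) P := by
    have hgm : Measurable (fun x => (f x) ^ 2) := hf.pow_const 2
    have h : Integrable (fun x => (f x) ^ 2) (P.map X) :=
      (integrable_map_measure hgm.aestronglyMeasurable hX.aemeasurable).mpr hL2
    rw [hmarg] at h
    exact (integrable_map_measure hgm.aestronglyMeasurable hX'.aemeasurable).mp h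
  -- derivative of the mgf
  have hA : Integrable (fun ω => f (X ω) * Real.exp (l * f (X ω))) P ∧
      HasDerivAt (fun t => ∫ ω, Real.exp (t * f (X ω)) ∂P)
        (∫ ω, f (X ω) * Real.exp (l * f (X ω)) ∂P) l := by
    have hbound_int : Integrable (fun ω =>
        (Real.exp (f (X ω)) + Real.exp (-f (X ω))) *
        (Real.exp ((l+1) * f (X ω)) + Real.exp ((l-1) * f (X ω)))) P := by
      have hrw : (fun ω =>
          (Real.exp (f (X ω)) + Real.exp (-f (X ω))) *
          (Real.exp ((l+1) * f (X ω)) + Real.exp ((l-1) * f (X ω)))) =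
          (fun ω => Real.exp ((l+2) * f (X ω)) + Real.exp (l * f (X ω))
            + (Real.exp (l * f (X ω)) + Real.exp ((l-2) * f (X ω)))) := by
        funext ω
        rw [add_mul, mul_add, mul_add, ← Real.exp_add, ← Real.exp_add, ← Real.exp_add,
          ← Real.exp_add]
        ring_nf
      rw [hrw]
      exact ((hmgf (l+2)).add (hmgf l)).add ((hmgf l).add (hmgf (l-2)))
    have h_bound : ∀ ω : Ω, ∀ x ∈ Metric.ball l 1,
        ‖f (X ω) * Real.exp (x * f (X ω))‖ ≤
          (Real.exp (f (X ω)) + Real.exp (-f (X ω))) *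
          (Real.exp ((l+1) * f (X ω)) + Real.exp ((l-1) * f (X ω))) := by
      intro ω x hx
      have hx1 : |x - l| < 1 := by rwa [Metric.mem_ball, Real.dist_eq] at hx
      have hx2 := abs_lt.mp hx1
      have hxy : Real.exp (x * f (X ω)) ≤
          Real.exp ((l+1) * f (X ω)) + Real.exp ((l-1) * f (X ω)) := by
        rcases le_or_gt 0 (f (X ω)) with hy | hy
        · have h3 : x * f (X ω) ≤ (l+1) * f (X ω) := by nlinarith
          exact le_add_of_le_of_nonneg (Real.exp_le_exp.2 h3) (Real.exp_pos _).le
        · have h3 : x * f (X ω) ≤ (l-1) * f (X ω) := by nlinarith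
          exact le_add_of_nonneg_of_le (Real.exp_pos _).le (Real.exp_le_exp.2 h3)
      rw [Real.norm_eq_abs, abs_mul, abs_of_pos (Real.exp_pos _)]
      exact mul_le_mul (abs_le_exp_add_exp_neg _) hxy (Real.exp_pos _).le (by positivity)
    have h_diff : ∀ ω : Ω, ∀ x ∈ Metric.ball l 1,
        HasDerivAt (fun t => Real.exp (t * f (X ω)))
          (f (X ω) * Real.exp (x * f (X ω))) x := by
      intro ω x _
      have h1 : HasDerivAt (fun t : ℝ => t * f (X ω)) (f (X ω)) x := hasDerivAt_mul_const _
      have h2 := h1.exp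
      convert h2 using 1
      ring
    have hres := hasDerivAt_integral_of_dominated_loc_of_deriv_le (μ := P)
      (F := fun t ω => Real.exp (t * f (X ω)))
      (F' := fun t ω => f (X ω) * Real.exp (t * f (X ω)))
      (x₀ := l) (Metric.ball_mem_nhds l one_pos)
      (Filter.Eventually.of_forall fun t => ((hYm.const_mul t).exp).aestronglyMeasurable)
      (hmgf l)
      ((hYm.mul ((hYm.const_mul l).exp)).aestronglyMeasurable)
      (Filter.Eventually.of_forall h_bound)
      hbound_int
      (Filter.Eventually.of_forall h_diff)
    exact hres
  refine ⟨hA.2.differentiableAt, ?_⟩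
  rw [hA.2.deriv]
  -- integrability facts
  have hEsq : Integrable (fun ω => Real.exp (l * f (X ω)) ^ 2) P := by
    have hrw : (fun ω => Real.exp (l * f (X ω)) ^ 2)
        = fun ω => Real.exp (2 * l * f (X ω)) := by
      funext ω; rw [sq, ← Real.exp_add]; ring_nf
    rw [hrw]; exact hmgf (2 * l)
  have hGint : Integrable (fun ω => F (X ω) (X' ω)) P := by
    refine ((hFL2.add (integrable_const 1)).div_const 2).mono'
      hGm.aestronglyMeasurable (Filter.Eventually.of_forall fun ω => ?_)
    simp only [Pi.add_apply]
    rw [Real.norm_eq_abs]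
    nlinarith [sq_nonneg (|F (X ω) (X' ω)| - 1), sq_abs (F (X ω) (X' ω)),
      abs_nonneg (F (X ω) (X' ω))]
  have hint1 : Integrable (fun ω => Real.exp (l * f (X ω)) * F (X ω) (X' ω)) P := by
    refine ((hEsq.add hFL2).div_const 2).mono'
      (((hYm.const_mul l).exp.mul hGm).aestronglyMeasurable)
      (Filter.Eventually.of_forall fun ω => ?_)
    simp only [Pi.add_apply]
    rw [Real.norm_eq_abs, abs_mul, abs_of_pos (Real.exp_pos _)]
    nlinarith [sq_nonneg (Real.exp (l * f (X ω)) - |F (X ω) (X' ω)|),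
      sq_abs (F (X ω) (X' ω)), abs_nonneg (F (X ω) (X' ω)), Real.exp_pos (l * f (X ω))]
  have hg2m : Measurable (fun p : 𝒳 × 𝒳 => Real.exp (l * f p.2) * F p.1 p.2) :=
    (((hf.comp measurable_snd).const_mul l).exp).mul hFmeas
  have hint2 : Integrable (fun ω => Real.exp (l * f (X' ω)) * F (X ω) (X' ω)) P := by
    have h0 : Integrable (fun ω => Real.exp (l * f (X ω)) * F (X' ω) (X ω)) P := by
      have heq : (fun ω => Real.exp (l * f (X ω)) * F (X' ω) (X ω))
          = fun ω => -(Real.exp (l * f (X ω)) * F (X ω) (X' ω)) := by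
        funext ω; rw [hFanti (X' ω) (X ω)]; ring
      rw [heq]; exact hint1.neg
    exact hswap_int (fun p => Real.exp (l * f p.2) * F p.1 p.2) hg2m h0
  -- step B : use the conditional expectation
  have heLsm : StronglyMeasurable[MeasurableSpace.comap X inferInstance]
      (fun ω => Real.exp (l * f (X ω))) := by
    have hXm : Measurable[MeasurableSpace.comap X inferInstance] X :=
      Measurable.of_comap_le le_rfl
    exact Measurable.stronglyMeasurable (((hf.const_mul l).exp).comp hXm)
  have hpull1 := condExp_mul_of_stronglyMeasurable_left (μ := P) heLsm
    (g := fun ω => F (X ω) (X' ω)) hint1 hGint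
  have hB : ∫ ω, f (X ω) * Real.exp (l * f (X ω)) ∂P
      = ∫ ω, Real.exp (l * f (X ω)) * F (X ω) (X' ω) ∂P := by
    have e2 : ∫ ω, Real.exp (l * f (X ω)) * F (X ω) (X' ω) ∂P
        = ∫ ω, Real.exp (l * f (X ω)) *
            (P[(fun ω => F (X ω) (X' ω)) | MeasurableSpace.comap X inferInstance]) ω ∂P := by
      calc ∫ ω, Real.exp (l * f (X ω)) * F (X ω) (X' ω) ∂P
          = ∫ ω, (P[(fun ω => Real.exp (l * f (X ω)) * F (X ω) (X' ω))
              | MeasurableSpace.comap X inferInstance]) ω ∂P :=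
            (integral_condExp hm).symm
        _ = ∫ ω, Real.exp (l * f (X ω)) *
              (P[(fun ω => F (X ω) (X' ω)) | MeasurableSpace.comap X inferInstance]) ω ∂P :=
            integral_congr_ae hpull1
    rw [e2]
    apply integral_congr_ae
    filter_upwards [hFcond] with ω h
    rw [h]; ring
  -- step C : antisymmetrization
  have hswapC : ∫ ω, Real.exp (l * f (X' ω)) * F (X ω) (X' ω) ∂P
      = -∫ ω, Real.exp (l * f (X ω)) * F (X ω) (X' ω) ∂P := by
    have h := hswap_eq (fun p => Real.exp (l * f p.2) * F p.1 p.2) hg2m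
    calc ∫ ω, Real.exp (l * f (X' ω)) * F (X ω) (X' ω) ∂P
        = ∫ ω, Real.exp (l * f (X ω)) * F (X' ω) (X ω) ∂P := h
      _ = ∫ ω, -(Real.exp (l * f (X ω)) * F (X ω) (X' ω)) ∂P := by
          apply integral_congr_ae
          exact Filter.Eventually.of_forall fun ω =>
            show Real.exp (l * f (X ω)) * F (X' ω) (X ω)
              = -(Real.exp (l * f (X ω)) * F (X ω) (X' ω)) by
            rw [hFanti (X' ω) (X ω)]; ring
      _ = -∫ ω, Real.exp (l * f (X ω)) * F (X ω) (X' ω) ∂P := integral_neg _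
  have hC : ∫ ω, Real.exp (l * f (X ω)) * F (X ω) (X' ω) ∂P
      = (1/2) * ∫ ω, (Real.exp (l * f (X ω)) - Real.exp (l * f (X' ω)))
          * F (X ω) (X' ω) ∂P := by
    have hsub : ∫ ω, (Real.exp (l * f (X ω)) - Real.exp (l * f (X' ω)))
          * F (X ω) (X' ω) ∂P
        = (∫ ω, Real.exp (l * f (X ω)) * F (X ω) (X' ω) ∂P)
          - ∫ ω, Real.exp (l * f (X' ω)) * F (X ω) (X' ω) ∂P := by
      rw [← integral_sub hint1 hint2]
      exact integral_congr_ae (Filter.Eventually.of_forall fun ω => by ring)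
    rw [hsub, hswapC]; ring
  -- step D : integrability of the dominating quantities
  have hintQ : Integrable (fun ω => Real.exp (l * f (X ω))
      * |(f (X ω) - f (X' ω)) * F (X ω) (X' ω)|) P := by
    have hexp4' : Integrable (fun ω => Real.exp (-(4 * f (X' ω)))) P := by
      have hrw : (fun ω => Real.exp (-(4 * f (X' ω))))
          = fun ω => Real.exp ((-4) * f (X' ω)) := by
        funext ω; ring_nf
      rw [hrw]; exact hmgf' (-4)
    refine Integrable.mono' (g := fun ω =>
        (Real.exp ((2*l+2) * f (X ω)) + Real.exp ((2*l-2) * f (X ω))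
          + 2 * Real.exp (2*l*f (X ω))) +
        ((Real.exp (4 * f (X' ω)) + Real.exp (4*l*f (X ω))) / 2
          + (Real.exp (-(4 * f (X' ω))) + Real.exp (4*l*f (X ω))) / 2
          + 2 * Real.exp (2*l*f (X ω))) + (F (X ω) (X' ω)) ^ 2 / 2)
      ?_ (((hYm.const_mul l).exp.mul ((hYm.sub hY'm).mul hGm).abs).aestronglyMeasurable)
      (Filter.Eventually.of_forall fun ω => ?_)
    · refine Integrable.add (Integrable.add ?_ ?_) (hFL2.div_const 2)
      · exact ((hmgf (2*l+2)).add (hmgf (2*l-2))).add ((hmgf (2*l)).const_mul 2)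
      · exact ((((hmgf' 4).add (hmgf (4*l))).div_const 2).add
          ((hexp4'.add (hmgf (4*l))).div_const 2)).add ((hmgf (2*l)).const_mul 2)
    · rw [Real.norm_eq_abs, abs_of_nonneg (by positivity)]
      have hk := key_dom l (f (X ω)) (f (X' ω)) (F (X ω) (X' ω))
      linarith [hk]
  have hgQm : Measurable (fun p : 𝒳 × 𝒳 =>
      Real.exp (l * f p.2) * |(f p.1 - f p.2) * F p.1 p.2|) := by
    exact (((hf.comp measurable_snd).const_mul l).exp).mul
      ((((hf.comp measurable_fst).sub (hf.comp measurable_snd)).mul hFmeas).abs)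
  have habs_swap : ∀ ω, (f (X' ω) - f (X ω)) * F (X' ω) (X ω)
      = (f (X ω) - f (X' ω)) * F (X ω) (X' ω) := by
    intro ω; rw [hFanti (X' ω) (X ω)]; ring
  have hintQ' : Integrable (fun ω => Real.exp (l * f (X' ω))
      * |(f (X ω) - f (X' ω)) * F (X ω) (X' ω)|) P := by
    have h0 : Integrable (fun ω => Real.exp (l * f (X ω))
        * |(f (X' ω) - f (X ω)) * F (X' ω) (X ω)|) P := by
      have heq : (fun ω => Real.exp (l * f (X ω)) * |(f (X' ω) - f (X ω)) * F (X' ω) (X ω)|)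
          = fun ω => Real.exp (l * f (X ω)) * |(f (X ω) - f (X' ω)) * F (X ω) (X' ω)| := by
        funext ω; rw [habs_swap ω]
      rw [heq]; exact hintQ
    exact hswap_int _ hgQm h0
  have hsymQ : ∫ ω, Real.exp (l * f (X' ω)) * |(f (X ω) - f (X' ω)) * F (X ω) (X' ω)| ∂P
      = ∫ ω, Real.exp (l * f (X ω)) * |(f (X ω) - f (X' ω)) * F (X ω) (X' ω)| ∂P := by
    have h := hswap_eq _ hgQm
    calc ∫ ω, Real.exp (l * f (X' ω)) * |(f (X ω) - f (X' ω)) * F (X ω) (X' ω)| ∂P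
        = ∫ ω, Real.exp (l * f (X ω)) * |(f (X' ω) - f (X ω)) * F (X' ω) (X ω)| ∂P := h
      _ = ∫ ω, Real.exp (l * f (X ω)) * |(f (X ω) - f (X' ω)) * F (X ω) (X' ω)| ∂P := by
          apply integral_congr_ae
          exact Filter.Eventually.of_forall fun ω =>
            show Real.exp (l * f (X ω)) * |(f (X' ω) - f (X ω)) * F (X' ω) (X ω)|
              = Real.exp (l * f (X ω)) * |(f (X ω) - f (X' ω)) * F (X ω) (X' ω)| by
            rw [habs_swap ω]
  have hintsub : Integrable (fun ω => (Real.exp (l * f (X ω)) - Real.exp (l * f (X' ω)))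
      * F (X ω) (X' ω)) P := by
    have heq : (fun ω => (Real.exp (l * f (X ω)) - Real.exp (l * f (X' ω))) * F (X ω) (X' ω))
        = fun ω => Real.exp (l * f (X ω)) * F (X ω) (X' ω)
          - Real.exp (l * f (X' ω)) * F (X ω) (X' ω) := by
      funext ω; ring
    rw [heq]; exact hint1.sub hint2
  have hD : ∫ ω, (Real.exp (l * f (X ω)) - Real.exp (l * f (X' ω))) * F (X ω) (X' ω) ∂P
      ≤ ∫ ω, |l| / 2 * (Real.exp (l * f (X ω)) * |(f (X ω) - f (X' ω)) * F (X ω) (X' ω)|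
          + Real.exp (l * f (X' ω)) * |(f (X ω) - f (X' ω)) * F (X ω) (X' ω)|) ∂P := by
    refine integral_mono hintsub ((hintQ.add hintQ').const_mul (|l| / 2)) ?_
    intro ω
    exact key_pt l (f (X ω)) (f (X' ω)) (F (X ω) (X' ω))
  have hDval : ∫ ω, |l| / 2 * (Real.exp (l * f (X ω)) * |(f (X ω) - f (X' ω)) * F (X ω) (X' ω)|
          + Real.exp (l * f (X' ω)) * |(f (X ω) - f (X' ω)) * F (X ω) (X' ω)|) ∂P
      = |l| * ∫ ω, Real.exp (l * f (X ω))
          * |(f (X ω) - f (X' ω)) * F (X ω) (X' ω)| ∂P := by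
    rw [integral_const_mul, integral_add hintQ hintQ', hsymQ]; ring
  -- step E : back to V via the conditional expectation
  have hintH : Integrable (fun ω => |(f (X ω) - f (X' ω)) * F (X ω) (X' ω)|) P := by
    refine Integrable.mono' (g := fun ω =>
        (2 * (f (X ω)) ^ 2 + 2 * (f (X' ω)) ^ 2 + (F (X ω) (X' ω)) ^ 2) / 2)
      ((((hL2.const_mul 2).add (hL2'.const_mul 2)).add hFL2).div_const 2)
      (((hYm.sub hY'm).mul hGm).abs.aestronglyMeasurable)
      (Filter.Eventually.of_forall fun ω => ?_)
    rw [Real.norm_eq_abs, abs_abs, abs_mul]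
    nlinarith [sq_nonneg (|f (X ω) - f (X' ω)| - |F (X ω) (X' ω)|),
      sq_abs (f (X ω) - f (X' ω)), sq_abs (F (X ω) (X' ω)),
      sq_nonneg (f (X ω) + f (X' ω)), abs_nonneg (f (X ω) - f (X' ω)),
      abs_nonneg (F (X ω) (X' ω)), sq_abs (f (X ω)), sq_abs (f (X' ω)),
      sq_nonneg (f (X ω) - f (X' ω))]
  have hpull2 := condExp_mul_of_stronglyMeasurable_left (μ := P) heLsm
    (g := fun ω => |(f (X ω) - f (X' ω)) * F (X ω) (X' ω)|) hintQ hintH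
  have hQcond : ∫ ω, Real.exp (l * f (X ω)) * |(f (X ω) - f (X' ω)) * F (X ω) (X' ω)| ∂P
      = ∫ ω, Real.exp (l * f (X ω)) *
          (P[(fun ω' => |(f (X ω') - f (X' ω')) * F (X ω') (X' ω')|)
            | MeasurableSpace.comap X inferInstance]) ω ∂P := by
    calc ∫ ω, Real.exp (l * f (X ω)) * |(f (X ω) - f (X' ω)) * F (X ω) (X' ω)| ∂P
        = ∫ ω, (P[(fun ω => Real.exp (l * f (X ω))
            * |(f (X ω) - f (X' ω)) * F (X ω) (X' ω)|)
            | MeasurableSpace.comap X inferInstance]) ω ∂P :=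
          (integral_condExp hm).symm
      _ = ∫ ω, Real.exp (l * f (X ω)) *
            (P[(fun ω' => |(f (X ω') - f (X' ω')) * F (X ω') (X' ω')|)
              | MeasurableSpace.comap X inferInstance]) ω ∂P :=
          integral_congr_ae hpull2
  have hVval : |l| * ∫ ω, Real.exp (l * f (X ω)) * V ω ∂P
      = |l| / 2 * ∫ ω, Real.exp (l * f (X ω))
          * |(f (X ω) - f (X' ω)) * F (X ω) (X' ω)| ∂P := by
    rw [hQcond, hV]
    rw [show (fun ω => Real.exp (l * f (X ω)) * ((fun ω => (1 / 2 : ℝ) *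
        (P[(fun ω' => |(f (X ω') - f (X' ω')) * F (X ω') (X' ω')|)
          | MeasurableSpace.comap X inferInstance]) ω) ω)) = fun ω => (1/2 : ℝ) *
        (Real.exp (l * f (X ω)) *
          (P[(fun ω' => |(f (X ω') - f (X' ω')) * F (X ω') (X' ω')|)
            | MeasurableSpace.comap X inferInstance]) ω) from funext fun ω => by ring]
    rw [integral_const_mul]
    ring
  calc ∫ ω, f (X ω) * Real.exp (l * f (X ω)) ∂P
      = (1/2) * ∫ ω, (Real.exp (l * f (X ω)) - Real.exp (l * f (X' ω)))
          * F (X ω) (X' ω) ∂P := by rw [hB, hC]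
    _ ≤ (1/2) * (|l| * ∫ ω, Real.exp (l * f (X ω))
          * |(f (X ω) - f (X' ω)) * F (X ω) (X' ω)| ∂P) := by
        rw [← hDval]; linarith [hD]
    _ = |l| / 2 * ∫ ω, Real.exp (l * f (X ω))
          * |(f (X ω) - f (X' ω)) * F (X ω) (X' ω)| ∂P := by ring
    _ = |l| * ∫ ω, Real.exp (l * f (X ω)) * V ω ∂P := hVval.symm
end

section
/- Chatterjee's fourth lemma: under the exchangeable-pair setup, for every positive integer k such that E[f(X)^{2k}] < ∞ and E[V^k] < ∞, one has E[f(X)^{2k}] ≤ (2k − 1)^k · E[V^k]. -/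
open MeasureTheory Finset

lemma aux_pair (u v : ℝ) (hu : 0 ≤ u) (hv : 0 ≤ v) {i m : ℕ} (him : i ≤ m) :
    u ^ i * v ^ (m - i) + u ^ (m - i) * v ^ i ≤ u ^ m + v ^ m := by
  have key : 0 ≤ (u ^ i - v ^ i) * (u ^ (m - i) - v ^ (m - i)) := by
    rcases le_total u v with h | h
    · have g1 := pow_le_pow_left₀ hu h i
      have g2 := pow_le_pow_left₀ hu h (m - i)
      nlinarith
    · have g1 := pow_le_pow_left₀ hv h i
      have g2 := pow_le_pow_left₀ hv h (m - i)
      nlinarith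
  have h1 : u ^ i * u ^ (m - i) = u ^ m := by rw [← pow_add]; congr 1; omega
  have h2 : v ^ i * v ^ (m - i) = v ^ m := by rw [← pow_add]; congr 1; omega
  nlinarith [key]

lemma aux_sum (u v : ℝ) (hu : 0 ≤ u) (hv : 0 ≤ v) (j : ℕ) :
    ∑ i ∈ Finset.range (2 * j + 1), u ^ i * v ^ (2 * j - i)
      ≤ (2 * (j : ℝ) + 1) / 2 * (u ^ (2 * j) + v ^ (2 * j)) := by
  have hrefl : ∑ i ∈ Finset.range (2 * j + 1), u ^ (2 * j - i) * v ^ i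
      = ∑ i ∈ Finset.range (2 * j + 1), u ^ i * v ^ (2 * j - i) := by
    rw [← Finset.sum_range_reflect]
    refine Finset.sum_congr rfl fun i hi => ?_
    have hi' : i ≤ 2 * j := by have := Finset.mem_range.mp hi; omega
    have e1 : 2 * j + 1 - 1 - i = 2 * j - i := by omega
    rw [e1, Nat.sub_sub_self hi']
  have hsum : (2 : ℝ) * ∑ i ∈ Finset.range (2 * j + 1), u ^ i * v ^ (2 * j - i)
      ≤ (2 * j + 1 : ℕ) * (u ^ (2 * j) + v ^ (2 * j)) := by
    have : (2 : ℝ) * ∑ i ∈ Finset.range (2 * j + 1), u ^ i * v ^ (2 * j - i)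
        = ∑ i ∈ Finset.range (2 * j + 1),
            (u ^ i * v ^ (2 * j - i) + u ^ (2 * j - i) * v ^ i) := by
      rw [Finset.sum_add_distrib, hrefl]; ring
    rw [this]
    calc ∑ i ∈ Finset.range (2 * j + 1),
            (u ^ i * v ^ (2 * j - i) + u ^ (2 * j - i) * v ^ i)
        ≤ ∑ _i ∈ Finset.range (2 * j + 1), (u ^ (2 * j) + v ^ (2 * j)) :=
          Finset.sum_le_sum fun i hi =>
            aux_pair u v hu hv (by have := Finset.mem_range.mp hi; omega)
      _ = (2 * j + 1 : ℕ) * (u ^ (2 * j) + v ^ (2 * j)) := by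
          rw [Finset.sum_const, Finset.card_range, nsmul_eq_mul]
  push_cast at hsum
  linarith

lemma aux_abs (x y : ℝ) (j : ℕ) :
    |x ^ (2 * j + 1) - y ^ (2 * j + 1)|
      ≤ (2 * (j : ℝ) + 1) / 2 * (x ^ (2 * j) + y ^ (2 * j)) * |x - y| := by
  have hgs := geom_sum₂_mul x y (2 * j + 1)
  rw [← hgs, abs_mul]
  have h1 : |∑ i ∈ Finset.range (2 * j + 1), x ^ i * y ^ (2 * j + 1 - 1 - i)|
      ≤ (2 * (j : ℝ) + 1) / 2 * (x ^ (2 * j) + y ^ (2 * j)) := by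
    calc |∑ i ∈ Finset.range (2 * j + 1), x ^ i * y ^ (2 * j + 1 - 1 - i)|
        ≤ ∑ i ∈ Finset.range (2 * j + 1), |x ^ i * y ^ (2 * j + 1 - 1 - i)| :=
          Finset.abs_sum_le_sum_abs _ _
      _ = ∑ i ∈ Finset.range (2 * j + 1), |x| ^ i * |y| ^ (2 * j - i) := by
          refine Finset.sum_congr rfl fun i hi => ?_
          rw [abs_mul, abs_pow, abs_pow, show 2 * j + 1 - 1 - i = 2 * j - i by omega]
      _ ≤ (2 * (j : ℝ) + 1) / 2 * (|x| ^ (2 * j) + |y| ^ (2 * j)) :=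
          aux_sum _ _ (abs_nonneg x) (abs_nonneg y) j
      _ = (2 * (j : ℝ) + 1) / 2 * (x ^ (2 * j) + y ^ (2 * j)) := by
          rw [(even_two_mul j).pow_abs, (even_two_mul j).pow_abs]
  exact mul_le_mul_of_nonneg_right h1 (abs_nonneg _)

lemma aux_young (u v : ℝ) (hu : 0 ≤ u) (hv : 0 ≤ v) (j : ℕ) :
    ((j : ℝ) + 1) * (u ^ j * v) ≤ (j : ℝ) * u ^ (j + 1) + v ^ (j + 1) := by
  have hj1 : (0 : ℝ) < (j : ℝ) + 1 := by positivity
  have h := Real.geom_mean_le_arith_mean2_weighted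
    (w₁ := (j : ℝ) / ((j : ℝ) + 1)) (w₂ := 1 / ((j : ℝ) + 1))
    (p₁ := u ^ (j + 1)) (p₂ := v ^ (j + 1))
    (by positivity) (by positivity) (by positivity) (by positivity)
    (by field_simp)
  have e1 : (u ^ (j + 1)) ^ ((j : ℝ) / ((j : ℝ) + 1)) = u ^ j := by
    rw [← Real.rpow_natCast u (j + 1), ← Real.rpow_mul hu,
      show ((j + 1 : ℕ) : ℝ) * ((j : ℝ) / ((j : ℝ) + 1)) = (j : ℝ) by
        push_cast; field_simp]
    exact Real.rpow_natCast u j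
  have e2 : (v ^ (j + 1)) ^ ((1 : ℝ) / ((j : ℝ) + 1)) = v := by
    rw [← Real.rpow_natCast v (j + 1), ← Real.rpow_mul hv,
      show ((j + 1 : ℕ) : ℝ) * ((1 : ℝ) / ((j : ℝ) + 1)) = 1 by
        push_cast; field_simp]
    exact Real.rpow_one v
  rw [e1, e2] at h
  have h' : u ^ j * v ≤ ((j : ℝ) * u ^ (j + 1) + v ^ (j + 1)) / ((j : ℝ) + 1) :=
    le_trans h (le_of_eq (by field_simp))
  have h'' := (le_div_iff₀ hj1).mp h'
  nlinarith [h'']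

lemma aux_young' (x y : ℝ) (hx : 0 ≤ x) (hy : 0 ≤ y) (j : ℕ) :
    x ^ j * y ≤ (j : ℝ) / (((j : ℝ) + 1) * (2 * (j : ℝ) + 1)) * x ^ (j + 1)
      + (2 * (j : ℝ) + 1) ^ j / ((j : ℝ) + 1) * y ^ (j + 1) := by
  have hc : (0 : ℝ) < 2 * (j : ℝ) + 1 := by positivity
  have hj1 : (0 : ℝ) < (j : ℝ) + 1 := by positivity
  have hpow : (0 : ℝ) < (2 * (j : ℝ) + 1) ^ j := by positivity
  have h := aux_young (x / (2 * (j : ℝ) + 1)) y (by positivity) hy j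
  rw [div_pow, div_pow] at h
  have h2 := mul_le_mul_of_nonneg_left h (le_of_lt (div_pos hpow hj1))
  calc x ^ j * y
      = (2 * (j : ℝ) + 1) ^ j / ((j : ℝ) + 1)
        * (((j : ℝ) + 1) * (x ^ j / (2 * (j : ℝ) + 1) ^ j * y)) := by
        field_simp
    _ ≤ (2 * (j : ℝ) + 1) ^ j / ((j : ℝ) + 1)
        * ((j : ℝ) * (x ^ (j + 1) / (2 * (j : ℝ) + 1) ^ (j + 1)) + y ^ (j + 1)) := h2
    _ = (j : ℝ) / (((j : ℝ) + 1) * (2 * (j : ℝ) + 1)) * x ^ (j + 1)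
        + (2 * (j : ℝ) + 1) ^ j / ((j : ℝ) + 1) * y ^ (j + 1) := by
        rw [pow_succ]
        field_simp
        ring

lemma aux_norm_le {a b : ℝ} (ha : 0 ≤ a) (hab : a ≤ b) : ‖a‖ ≤ ‖b‖ := by
  rw [Real.norm_eq_abs, Real.norm_eq_abs, abs_of_nonneg ha, abs_of_nonneg (ha.trans hab)]
  exact hab

section Main

open MeasureTheory

theorem chatterjee_fourth_lemma
    {Ω 𝒳 : Type*} [MeasurableSpace Ω] [MeasurableSpace 𝒳]
    (P : Measure Ω) [IsProbabilityMeasure P]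
    (X X' : Ω → 𝒳) (hX : Measurable X) (hX' : Measurable X')
    (hexch : P.map (fun ω => (X ω, X' ω)) = P.map (fun ω => (X' ω, X ω)))
    (f : 𝒳 → ℝ) (hf : Measurable f)
    (hmean : ∫ ω, f (X ω) ∂P = 0)
    (hL2 : Integrable (fun ω => (f (X ω)) ^ 2) P)
    (hmgf : ∀ t : ℝ, Integrable (fun ω => Real.exp (t * f (X ω))) P)
    (F : 𝒳 → 𝒳 → ℝ) (hFmeas : Measurable fun p : 𝒳 × 𝒳 => F p.1 p.2)
    (hFanti : ∀ x y, F x y = -F y x)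
    (hFL2 : Integrable (fun ω => (F (X ω) (X' ω)) ^ 2) P)
    (hFcond : MeasureTheory.condExp (MeasurableSpace.comap X inferInstance) P
        (fun ω => F (X ω) (X' ω)) =ᵐ[P] fun ω => f (X ω))
    (V : Ω → ℝ)
    (hV : V = fun ω => (1 / 2 : ℝ) *
      (MeasureTheory.condExp (MeasurableSpace.comap X inferInstance) P
        (fun ω' => |(f (X ω') - f (X' ω')) * F (X ω') (X' ω')|) ω))
    :
    ∀ k : ℕ, 0 < k →
      Integrable (fun ω => (f (X ω)) ^ (2 * k)) P →
      Integrable (fun ω => (V ω) ^ k) P →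
      ∫ ω, (f (X ω)) ^ (2 * k) ∂P
        ≤ (2 * (k : ℝ) - 1) ^ k * ∫ ω, (V ω) ^ k ∂P := by
  intro k hk hIf2k hIVk
  obtain ⟨j, rfl⟩ : ∃ j, k = j + 1 := ⟨k - 1, by omega⟩
  clear hk
  have hm := hX.comap_le
  -- basic measurability
  have ha : Measurable fun ω => f (X ω) := hf.comp hX
  have hb : Measurable fun ω => f (X' ω) := hf.comp hX'
  have hpair : Measurable fun ω => (X ω, X' ω) := hX.prodMk hX'
  have hpair' : Measurable fun ω => (X' ω, X ω) := hX'.prodMk hX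
  have hW : Measurable fun ω => F (X ω) (X' ω) := hFmeas.comp hpair
  have hXm : Measurable[MeasurableSpace.comap X inferInstance] X := measurable_iff_comap_le.mpr le_rfl
  have ham : ∀ n : ℕ, StronglyMeasurable[MeasurableSpace.comap X inferInstance] fun ω => f (X ω) ^ n := fun n =>
    (((hf.comp hXm).pow_const n).stronglyMeasurable)
  -- marginal law of X'
  have hmapX' : P.map X' = P.map X := by
    have h1 : P.map X' = (P.map (fun ω => (X' ω, X ω))).map Prod.fst := by
      rw [Measure.map_map measurable_fst hpair']
      rfl
    have h2 : (P.map (fun ω => (X ω, X' ω))).map Prod.fst = P.map X := by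
      rw [Measure.map_map measurable_fst hpair]
      rfl
    rw [h1, ← hexch, h2]
  -- exchangeability for integrals
  have hexchInt : ∀ g : 𝒳 × 𝒳 → ℝ, Measurable g →
      ∫ ω, g (X ω, X' ω) ∂P = ∫ ω, g (X' ω, X ω) ∂P := by
    intro g hg
    rw [← integral_map hpair.aemeasurable hg.aestronglyMeasurable, hexch,
      integral_map hpair'.aemeasurable hg.aestronglyMeasurable]
  -- all moments of f (X ·)
  have hMa : ∀ n : ℕ, Integrable (fun ω => |f (X ω)| ^ n) P := by
    intro n
    refine (((hmgf 1).add (hmgf (-1))).const_mul ((Nat.factorial n : ℝ))).mono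
      ((ha.abs.pow_const n).aestronglyMeasurable) (ae_of_all _ fun ω => ?_)
    have h1 : |f (X ω)| ^ n / (Nat.factorial n : ℝ) ≤ Real.exp |f (X ω)| :=
      Real.pow_div_factorial_le_exp _ (abs_nonneg _) n
    have h2 : Real.exp |f (X ω)| ≤ Real.exp (f (X ω)) + Real.exp (-f (X ω)) := by
      rcases abs_cases (f (X ω)) with ⟨h, _⟩ | ⟨h, _⟩ <;> rw [h]
      · exact le_add_of_nonneg_right (Real.exp_pos _).le
      · exact le_add_of_nonneg_left (Real.exp_pos _).le
    have hfac : (0 : ℝ) < (Nat.factorial n : ℝ) := by exact_mod_cast n.factorial_pos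
    refine aux_norm_le (by positivity) ?_
    simp only [Pi.add_apply]
    rw [one_mul, neg_one_mul]
    calc |f (X ω)| ^ n = (Nat.factorial n : ℝ) * (|f (X ω)| ^ n / (Nat.factorial n : ℝ)) := by field_simp
      _ ≤ (Nat.factorial n : ℝ) * (Real.exp (f (X ω)) + Real.exp (-f (X ω))) :=
          mul_le_mul_of_nonneg_left (h1.trans h2) hfac.le
  -- all moments of f (X' ·)
  have hMb : ∀ n : ℕ, Integrable (fun ω => |f (X' ω)| ^ n) P := by
    intro n
    have h1 : Integrable (fun x => |f x| ^ n) (P.map X) :=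
      (integrable_map_measure ((hf.abs.pow_const n).aestronglyMeasurable)
        hX.aemeasurable).mpr (hMa n)
    rw [← hmapX'] at h1
    exact (integrable_map_measure ((hf.abs.pow_const n).aestronglyMeasurable)
      hX'.aemeasurable).mp h1
  -- mixed moments
  have hMab : ∀ i i' : ℕ, Integrable (fun ω => |f (X ω)| ^ i * |f (X' ω)| ^ i') P := by
    intro i i'
    refine (((hMa (i * 2)).add (hMb (i' * 2))).const_mul (1 / 2)).mono
      (((ha.abs.pow_const i).mul (hb.abs.pow_const i')).aestronglyMeasurable)
      (ae_of_all _ fun ω => ?_)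
    refine aux_norm_le (by positivity) ?_
    simp only [Pi.add_apply]
    rw [pow_mul, pow_mul]
    nlinarith [sq_nonneg (|f (X ω)| ^ i - |f (X' ω)| ^ i')]
  -- mixed moments with F
  have hMabW : ∀ i i' : ℕ, Integrable
      (fun ω => |f (X ω)| ^ i * |f (X' ω)| ^ i' * |F (X ω) (X' ω)|) P := by
    intro i i'
    refine (((hMab (i * 2) (i' * 2)).add hFL2).const_mul (1 / 2)).mono
      ((((ha.abs.pow_const i).mul (hb.abs.pow_const i')).mul hW.abs).aestronglyMeasurable)
      (ae_of_all _ fun ω => ?_)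
    refine aux_norm_le (by positivity) ?_
    simp only [Pi.add_apply]
    rw [pow_mul, pow_mul]
    have hsq : (F (X ω) (X' ω)) ^ 2 = |F (X ω) (X' ω)| ^ 2 := (sq_abs _).symm
    nlinarith [sq_nonneg (|f (X ω)| ^ i * |f (X' ω)| ^ i' - |F (X ω) (X' ω)|),
      sq_nonneg (|f (X ω)| ^ i * |f (X' ω)| ^ i')]
  -- specific integrability facts
  have I1 : Integrable (fun ω => f (X ω) ^ (2 * j + 1) * F (X ω) (X' ω)) P := by
    refine (hMabW (2 * j + 1) 0).mono ((ha.pow_const _).mul hW).aestronglyMeasurable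
      (ae_of_all _ fun ω => ?_)
    apply le_of_eq
    simp [Real.norm_eq_abs, abs_mul, abs_pow, abs_abs]
  have I1' : Integrable (fun ω => f (X' ω) ^ (2 * j + 1) * F (X ω) (X' ω)) P := by
    refine (hMabW 0 (2 * j + 1)).mono ((hb.pow_const _).mul hW).aestronglyMeasurable
      (ae_of_all _ fun ω => ?_)
    apply le_of_eq
    simp [Real.norm_eq_abs, abs_mul, abs_pow, abs_abs]
  have IW : Integrable (fun ω => F (X ω) (X' ω)) P := by
    refine (hMabW 0 0).mono hW.aestronglyMeasurable (ae_of_all _ fun ω => ?_)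
    apply le_of_eq
    simp [Real.norm_eq_abs, abs_abs]
  have habs3 : ∀ ω, |f (X ω) - f (X' ω)| ≤ |f (X ω)| + |f (X' ω)| := by
    intro ω
    calc |f (X ω) - f (X' ω)| = |f (X ω) + -f (X' ω)| := by rw [sub_eq_add_neg]
      _ ≤ |f (X ω)| + |-f (X' ω)| := abs_add_le _ _
      _ = |f (X ω)| + |f (X' ω)| := by rw [abs_neg]
  have I2 : Integrable (fun ω => |(f (X ω) - f (X' ω)) * F (X ω) (X' ω)|) P := by
    refine ((hMabW 1 0).add (hMabW 0 1)).mono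
      (((ha.sub hb).mul hW).abs.aestronglyMeasurable) (ae_of_all _ fun ω => ?_)
    refine aux_norm_le (abs_nonneg _) ?_
    simp only [Pi.add_apply, pow_one, pow_zero, one_mul, mul_one]
    rw [abs_mul]
    nlinarith [habs3 ω, abs_nonneg (F (X ω) (X' ω))]
  have I3 : Integrable
      (fun ω => f (X ω) ^ (2 * j) * |(f (X ω) - f (X' ω)) * F (X ω) (X' ω)|) P := by
    refine ((hMabW (2 * j + 1) 0).add (hMabW (2 * j) 1)).mono
      (((ha.pow_const _).mul (((ha.sub hb).mul hW).abs)).aestronglyMeasurable)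
      (ae_of_all _ fun ω => ?_)
    refine aux_norm_le (mul_nonneg ((even_two_mul j).pow_nonneg _) (abs_nonneg _)) ?_
    simp only [Pi.add_apply, pow_one, pow_zero, one_mul, mul_one]
    rw [← (even_two_mul j).pow_abs, abs_mul, pow_succ]
    nlinarith [habs3 ω, mul_nonneg (pow_nonneg (abs_nonneg (f (X ω))) (2 * j))
      (abs_nonneg (F (X ω) (X' ω)))]
  have I3' : Integrable
      (fun ω => f (X' ω) ^ (2 * j) * |(f (X ω) - f (X' ω)) * F (X ω) (X' ω)|) P := by
    refine ((hMabW 1 (2 * j)).add (hMabW 0 (2 * j + 1))).mono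
      (((hb.pow_const _).mul (((ha.sub hb).mul hW).abs)).aestronglyMeasurable)
      (ae_of_all _ fun ω => ?_)
    refine aux_norm_le (mul_nonneg ((even_two_mul j).pow_nonneg _) (abs_nonneg _)) ?_
    simp only [Pi.add_apply, pow_one, pow_zero, one_mul, mul_one]
    rw [← (even_two_mul j).pow_abs, abs_mul, pow_succ]
    nlinarith [habs3 ω, mul_nonneg (pow_nonneg (abs_nonneg (f (X' ω))) (2 * j))
      (abs_nonneg (F (X ω) (X' ω)))]
  have I4 : Integrable
      (fun ω => (f (X ω) ^ (2 * j + 1) - f (X' ω) ^ (2 * j + 1)) * F (X ω) (X' ω)) P :=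
    (I1.sub I1').congr (ae_of_all _ fun ω => by simp only [Pi.sub_apply]; ring)
  have I5 : Integrable (fun ω => (f (X ω) ^ (2 * j) + f (X' ω) ^ (2 * j)) *
      |(f (X ω) - f (X' ω)) * F (X ω) (X' ω)|) P :=
    (I3.add I3').congr (ae_of_all _ fun ω => by simp only [Pi.add_apply]; ring)
  -- conditional expectation pull-out 1
  have hce1 : condExp (MeasurableSpace.comap X inferInstance) P ((fun ω => f (X ω) ^ (2 * j + 1)) * (fun ω => F (X ω) (X' ω)))
      =ᵐ[P] (fun ω => f (X ω) ^ (2 * j + 1)) * condExp (MeasurableSpace.comap X inferInstance) P (fun ω => F (X ω) (X' ω)) :=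
    condExp_mul_of_stronglyMeasurable_left (ham (2 * j + 1)) I1 IW
  have key1 : ∫ ω, f (X ω) ^ (2 * (j + 1)) ∂P
      = ∫ ω, f (X ω) ^ (2 * j + 1) * F (X ω) (X' ω) ∂P := by
    have e0 : ∫ ω, f (X ω) ^ (2 * (j + 1)) ∂P
        = ∫ ω, f (X ω) ^ (2 * j + 1) * f (X ω) ∂P := by
      refine integral_congr_ae (ae_of_all _ fun ω => ?_)
      dsimp only
      rw [show 2 * (j + 1) = 2 * j + 1 + 1 by omega, pow_succ]
    have e1 : ∫ ω, f (X ω) ^ (2 * j + 1) * f (X ω) ∂P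
        = ∫ ω, f (X ω) ^ (2 * j + 1) *
            condExp (MeasurableSpace.comap X inferInstance) P (fun ω' => F (X ω') (X' ω')) ω ∂P := by
      refine integral_congr_ae ?_
      filter_upwards [hFcond] with ω hω
      rw [hω]
    have e2 : ∫ ω, f (X ω) ^ (2 * j + 1) *
          condExp (MeasurableSpace.comap X inferInstance) P (fun ω' => F (X ω') (X' ω')) ω ∂P
        = ∫ ω, condExp (MeasurableSpace.comap X inferInstance) P ((fun ω' => f (X ω') ^ (2 * j + 1)) *
            (fun ω' => F (X ω') (X' ω'))) ω ∂P := by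
      refine integral_congr_ae ?_
      filter_upwards [hce1] with ω hω
      rw [hω]
      rfl
    rw [e0, e1, e2, integral_condExp hm]
    rfl
  -- exchange/antisymmetry
  have hg₁ : Measurable fun p : 𝒳 × 𝒳 => f p.1 ^ (2 * j + 1) * F p.1 p.2 :=
    ((hf.comp measurable_fst).pow_const _).mul hFmeas
  have key2 : ∫ ω, f (X ω) ^ (2 * j + 1) * F (X ω) (X' ω) ∂P
      = - ∫ ω, f (X' ω) ^ (2 * j + 1) * F (X ω) (X' ω) ∂P := by
    calc ∫ ω, f (X ω) ^ (2 * j + 1) * F (X ω) (X' ω) ∂P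
        = ∫ ω, f (X' ω) ^ (2 * j + 1) * F (X' ω) (X ω) ∂P := hexchInt _ hg₁
      _ = ∫ ω, -(f (X' ω) ^ (2 * j + 1) * F (X ω) (X' ω)) ∂P :=
          integral_congr_ae (ae_of_all _ fun ω => by
            dsimp only
            rw [hFanti (X' ω) (X ω)]; ring)
      _ = - ∫ ω, f (X' ω) ^ (2 * j + 1) * F (X ω) (X' ω) ∂P := integral_neg _
  have hsub : ∫ ω, (f (X ω) ^ (2 * j + 1) - f (X' ω) ^ (2 * j + 1)) * F (X ω) (X' ω) ∂P
      = (∫ ω, f (X ω) ^ (2 * j + 1) * F (X ω) (X' ω) ∂P)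
        - ∫ ω, f (X' ω) ^ (2 * j + 1) * F (X ω) (X' ω) ∂P := by
    rw [← integral_sub I1 I1']
    exact integral_congr_ae (ae_of_all _ fun ω => by simp only [Pi.sub_apply]; ring)
  -- the two main inequality steps
  have step5 : ∫ ω, (f (X ω) ^ (2 * j + 1) - f (X' ω) ^ (2 * j + 1)) * F (X ω) (X' ω) ∂P
      ≤ (2 * (j : ℝ) + 1) / 2 * ∫ ω, (f (X ω) ^ (2 * j) + f (X' ω) ^ (2 * j)) *
          |(f (X ω) - f (X' ω)) * F (X ω) (X' ω)| ∂P := by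
    calc ∫ ω, (f (X ω) ^ (2 * j + 1) - f (X' ω) ^ (2 * j + 1)) * F (X ω) (X' ω) ∂P
        ≤ |∫ ω, (f (X ω) ^ (2 * j + 1) - f (X' ω) ^ (2 * j + 1)) * F (X ω) (X' ω) ∂P| :=
          le_abs_self _
      _ ≤ ∫ ω, |(f (X ω) ^ (2 * j + 1) - f (X' ω) ^ (2 * j + 1)) * F (X ω) (X' ω)| ∂P := by
          have hni := norm_integral_le_integral_norm (μ := P)
            (fun ω => (f (X ω) ^ (2 * j + 1) - f (X' ω) ^ (2 * j + 1)) * F (X ω) (X' ω))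
          simp only [Real.norm_eq_abs] at hni
          exact hni
      _ ≤ ∫ ω, (2 * (j : ℝ) + 1) / 2 * ((f (X ω) ^ (2 * j) + f (X' ω) ^ (2 * j)) *
            |(f (X ω) - f (X' ω)) * F (X ω) (X' ω)|) ∂P := by
          refine integral_mono I4.abs (I5.const_mul _) fun ω => ?_
          rw [abs_mul, abs_mul]
          calc |f (X ω) ^ (2 * j + 1) - f (X' ω) ^ (2 * j + 1)| * |F (X ω) (X' ω)|
              ≤ ((2 * (j : ℝ) + 1) / 2 * (f (X ω) ^ (2 * j) + f (X' ω) ^ (2 * j)) *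
                  |f (X ω) - f (X' ω)|) * |F (X ω) (X' ω)| :=
                mul_le_mul_of_nonneg_right (aux_abs _ _ j) (abs_nonneg _)
            _ = (2 * (j : ℝ) + 1) / 2 * ((f (X ω) ^ (2 * j) + f (X' ω) ^ (2 * j)) *
                  (|f (X ω) - f (X' ω)| * |F (X ω) (X' ω)|)) := by ring
      _ = (2 * (j : ℝ) + 1) / 2 * ∫ ω, (f (X ω) ^ (2 * j) + f (X' ω) ^ (2 * j)) *
            |(f (X ω) - f (X' ω)) * F (X ω) (X' ω)| ∂P := integral_const_mul _ _
  -- exchange for the b-term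
  have hg₂ : Measurable fun p : 𝒳 × 𝒳 => f p.1 ^ (2 * j) * |(f p.1 - f p.2) * F p.1 p.2| :=
    ((hf.comp measurable_fst).pow_const _).mul
      ((((hf.comp measurable_fst).sub (hf.comp measurable_snd)).mul hFmeas).abs)
  have key6 : ∫ ω, f (X' ω) ^ (2 * j) * |(f (X ω) - f (X' ω)) * F (X ω) (X' ω)| ∂P
      = ∫ ω, f (X ω) ^ (2 * j) * |(f (X ω) - f (X' ω)) * F (X ω) (X' ω)| ∂P := by
    calc ∫ ω, f (X' ω) ^ (2 * j) * |(f (X ω) - f (X' ω)) * F (X ω) (X' ω)| ∂P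
        = ∫ ω, f (X' ω) ^ (2 * j) * |(f (X' ω) - f (X ω)) * F (X' ω) (X ω)| ∂P := by
          refine integral_congr_ae (ae_of_all _ fun ω => ?_)
          dsimp only
          rw [hFanti (X' ω) (X ω)]
          congr 1
          congr 1
          ring
      _ = ∫ ω, f (X ω) ^ (2 * j) * |(f (X ω) - f (X' ω)) * F (X ω) (X' ω)| ∂P :=
          (hexchInt _ hg₂).symm
  -- conditional expectation pull-out 2
  have hce2 : condExp (MeasurableSpace.comap X inferInstance) P ((fun ω => f (X ω) ^ (2 * j)) *
        (fun ω => |(f (X ω) - f (X' ω)) * F (X ω) (X' ω)|))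
      =ᵐ[P] (fun ω => f (X ω) ^ (2 * j)) *
        condExp (MeasurableSpace.comap X inferInstance) P (fun ω => |(f (X ω) - f (X' ω)) * F (X ω) (X' ω)|) :=
    condExp_mul_of_stronglyMeasurable_left (ham (2 * j)) I3 I2
  have hVc : ∀ ω, condExp (MeasurableSpace.comap X inferInstance) P
      (fun ω' => |(f (X ω') - f (X' ω')) * F (X ω') (X' ω')|) ω = 2 * V ω := by
    intro ω
    simp only [hV]
    ring
  have key7 : ∫ ω, f (X ω) ^ (2 * j) * |(f (X ω) - f (X' ω)) * F (X ω) (X' ω)| ∂P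
      = 2 * ∫ ω, f (X ω) ^ (2 * j) * V ω ∂P := by
    calc ∫ ω, f (X ω) ^ (2 * j) * |(f (X ω) - f (X' ω)) * F (X ω) (X' ω)| ∂P
        = ∫ ω, condExp (MeasurableSpace.comap X inferInstance) P ((fun ω' => f (X ω') ^ (2 * j)) *
            (fun ω' => |(f (X ω') - f (X' ω')) * F (X ω') (X' ω')|)) ω ∂P :=
          (integral_condExp hm).symm
      _ = ∫ ω, f (X ω) ^ (2 * j) *
            condExp (MeasurableSpace.comap X inferInstance) P (fun ω' => |(f (X ω') - f (X' ω')) * F (X ω') (X' ω')|) ω ∂P := by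
          refine integral_congr_ae ?_
          filter_upwards [hce2] with ω hω
          rw [hω]
          rfl
      _ = ∫ ω, 2 * (f (X ω) ^ (2 * j) * V ω) ∂P :=
          integral_congr_ae (ae_of_all _ fun ω => by dsimp only; rw [hVc ω]; ring)
      _ = 2 * ∫ ω, f (X ω) ^ (2 * j) * V ω ∂P := integral_const_mul _ _
  -- integrability of x^{2j} V
  have I6 : Integrable (fun ω => f (X ω) ^ (2 * j) * V ω) P := by
    have h1 : Integrable ((fun ω => f (X ω) ^ (2 * j)) *
        condExp (MeasurableSpace.comap X inferInstance) P (fun ω' => |(f (X ω') - f (X' ω')) * F (X ω') (X' ω')|)) P :=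
      integrable_condExp.congr hce2
    refine (h1.const_mul (1 / 2)).congr (ae_of_all _ fun ω => ?_)
    simp only [Pi.mul_apply]
    rw [hVc ω]
    ring
  -- V is a.e. nonnegative
  have hVnn : 0 ≤ᵐ[P] V := by
    have h0 : (0 : Ω → ℝ) ≤ᵐ[P] condExp (MeasurableSpace.comap X inferInstance) P
        (fun ω' => |(f (X ω') - f (X' ω')) * F (X ω') (X' ω')|) :=
      condExp_nonneg (ae_of_all _ fun ω => abs_nonneg _)
    filter_upwards [h0] with ω hω
    have := hVc ω
    simp only [Pi.zero_apply] at hω ⊢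
    linarith
  -- Young step
  have step8 : ∫ ω, f (X ω) ^ (2 * j) * V ω ∂P
      ≤ (j : ℝ) / (((j : ℝ) + 1) * (2 * (j : ℝ) + 1)) * ∫ ω, f (X ω) ^ (2 * (j + 1)) ∂P
        + (2 * (j : ℝ) + 1) ^ j / ((j : ℝ) + 1) * ∫ ω, V ω ^ (j + 1) ∂P := by
    calc ∫ ω, f (X ω) ^ (2 * j) * V ω ∂P
        ≤ ∫ ω, ((j : ℝ) / (((j : ℝ) + 1) * (2 * (j : ℝ) + 1)) * f (X ω) ^ (2 * (j + 1))
            + (2 * (j : ℝ) + 1) ^ j / ((j : ℝ) + 1) * V ω ^ (j + 1)) ∂P := by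
          refine integral_mono_ae I6 ((hIf2k.const_mul _).add (hIVk.const_mul _)) ?_
          filter_upwards [hVnn] with ω hω
          have h := aux_young' (f (X ω) ^ 2) (V ω) (sq_nonneg _) hω j
          rw [← pow_mul, ← pow_mul] at h
          exact h
      _ = _ := by
          rw [integral_add (hIf2k.const_mul _) (hIVk.const_mul _),
            integral_const_mul, integral_const_mul]
  -- assemble
  have hAeq : ∫ ω, (f (X ω) ^ (2 * j + 1) - f (X' ω) ^ (2 * j + 1)) * F (X ω) (X' ω) ∂P
      = 2 * ∫ ω, f (X ω) ^ (2 * (j + 1)) ∂P := by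
    rw [hsub]
    linarith [key1, key2]
  have hsplit : ∫ ω, (f (X ω) ^ (2 * j) + f (X' ω) ^ (2 * j)) *
        |(f (X ω) - f (X' ω)) * F (X ω) (X' ω)| ∂P
      = 2 * ∫ ω, f (X ω) ^ (2 * j) * |(f (X ω) - f (X' ω)) * F (X ω) (X' ω)| ∂P := by
    calc ∫ ω, (f (X ω) ^ (2 * j) + f (X' ω) ^ (2 * j)) *
          |(f (X ω) - f (X' ω)) * F (X ω) (X' ω)| ∂P
        = ∫ ω, (f (X ω) ^ (2 * j) * |(f (X ω) - f (X' ω)) * F (X ω) (X' ω)|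
            + f (X' ω) ^ (2 * j) * |(f (X ω) - f (X' ω)) * F (X ω) (X' ω)|) ∂P :=
          integral_congr_ae (ae_of_all _ fun ω => by dsimp only; ring)
      _ = (∫ ω, f (X ω) ^ (2 * j) * |(f (X ω) - f (X' ω)) * F (X ω) (X' ω)| ∂P)
          + ∫ ω, f (X' ω) ^ (2 * j) * |(f (X ω) - f (X' ω)) * F (X ω) (X' ω)| ∂P :=
          integral_add I3 I3'
      _ = _ := by rw [key6]; ring
  have hfinal : ∫ ω, f (X ω) ^ (2 * (j + 1)) ∂P
      ≤ (2 * (j : ℝ) + 1) * ∫ ω, f (X ω) ^ (2 * j) * V ω ∂P := by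
    have h5 := step5
    rw [hAeq, hsplit, key7] at h5
    nlinarith [h5]
  have hend : ∫ ω, f (X ω) ^ (2 * (j + 1)) ∂P
      ≤ (2 * (j : ℝ) + 1) * ((j : ℝ) / (((j : ℝ) + 1) * (2 * (j : ℝ) + 1)) *
          ∫ ω, f (X ω) ^ (2 * (j + 1)) ∂P
        + (2 * (j : ℝ) + 1) ^ j / ((j : ℝ) + 1) * ∫ ω, V ω ^ (j + 1) ∂P) :=
    hfinal.trans (mul_le_mul_of_nonneg_left step8 (by positivity))
  have hexpand : (2 * (j : ℝ) + 1) * ((j : ℝ) / (((j : ℝ) + 1) * (2 * (j : ℝ) + 1)) *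
          ∫ ω, f (X ω) ^ (2 * (j + 1)) ∂P
        + (2 * (j : ℝ) + 1) ^ j / ((j : ℝ) + 1) * ∫ ω, V ω ^ (j + 1) ∂P)
      = ((j : ℝ) * ∫ ω, f (X ω) ^ (2 * (j + 1)) ∂P
          + (2 * (j : ℝ) + 1) ^ (j + 1) * ∫ ω, V ω ^ (j + 1) ∂P) / ((j : ℝ) + 1) := by
    rw [pow_succ]
    field_simp
  rw [hexpand] at hend
  have h2 := (le_div_iff₀ (by positivity : (0 : ℝ) < (j : ℝ) + 1)).mp hend
  have hcast : (2 * ((j + 1 : ℕ) : ℝ) - 1) = 2 * (j : ℝ) + 1 := by push_cast; ring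
  rw [hcast]
  nlinarith [h2]

end Main
end

section
/- Combinatorial Hoeffding inequality (version I): for every N ≥ 1, every real N×N matrix A = (a_{i,j}) with normalized matrix D = (d_{i,j}), and every t ≥ 0, the combinatorial sum Y = Σ_{i=1}^N a_{i,π(i)} for a uniform random permutation π of [N] satisfies P( Y − E[Y] ≥ t ) ≤ exp( −t² / (4 N B_A² + 4 σ_A²) ), where B_A = max_{i,j} |d_{i,j}| and σ_A² = (N−1)⁻¹ Σ_{i,j} d_{i,j}². -/
open Finset
open scoped Classical

/-- Normalized matrix `d_{i,j} = a_{i,j} − N⁻¹Σ_k a_{k,j} − N⁻¹Σ_ℓ a_{i,ℓ} + N⁻²Σ_{k,ℓ} a_{k,ℓ}`. -/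
noncomputable def dmat (N : ℕ) (a : Fin N → Fin N → ℝ) (i j : Fin N) : ℝ :=
  a i j - (∑ k, a k j) / (N : ℝ) - (∑ l, a i l) / (N : ℝ) + (∑ k, ∑ l, a k l) / ((N : ℝ) ^ 2)

/-- `μ_A = E[Y] = N⁻¹ Σ_{i,j} a_{i,j}`. -/
noncomputable def muA (N : ℕ) (a : Fin N → Fin N → ℝ) : ℝ :=
  (∑ i, ∑ j, a i j) / (N : ℝ)

/-- `σ_A² = (N−1)⁻¹ Σ_{i,j} d_{i,j}²`. -/
noncomputable def sigmaA2 (N : ℕ) (a : Fin N → Fin N → ℝ) : ℝ :=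
  (∑ i, ∑ j, (dmat N a i j) ^ 2) / ((N : ℝ) - 1)

/-- `B_A = max_{i,j∈[N]} |d_{i,j}|`. -/
noncomputable def BA (N : ℕ) (a : Fin N → Fin N → ℝ) : ℝ :=
  ⨆ i : Fin N, ⨆ j : Fin N, |dmat N a i j|

/-- The combinatorial sum `Y(π) = Σ_{i=1}^N a_{i,π(i)}`. -/
noncomputable def combSum (N : ℕ) (a : Fin N → Fin N → ℝ) (π : Equiv.Perm (Fin N)) : ℝ :=
  ∑ i, a i (π i)

/-- Probability of an event under the uniform random permutation of `[N]`. -/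
noncomputable def permProb (N : ℕ) (p : Equiv.Perm (Fin N) → Prop) : ℝ :=
  (∑ π : Equiv.Perm (Fin N), if p π then (1 : ℝ) else 0) / (Nat.factorial N : ℝ)

section CombHoeffAux

variable {N : ℕ} {a : Fin N → Fin N → ℝ}

lemma exp_core {u : ℝ} (hu : 0 ≤ u) : Real.exp u - 1 ≤ u * (Real.exp u + 1) / 2 := by
  set g : ℝ → ℝ := fun v => v * (Real.exp v + 1) / 2 - (Real.exp v - 1) with hg
  have hder : ∀ v, HasDerivAt g ((Real.exp v + 1) / 2 + v * Real.exp v / 2 - Real.exp v) v := by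
    intro v
    have h1 : HasDerivAt (fun v : ℝ => v * (Real.exp v + 1))
        (1 * (Real.exp v + 1) + v * Real.exp v) v :=
      (hasDerivAt_id v).mul ((Real.hasDerivAt_exp v).add_const 1)
    have h2 := (h1.div_const 2).sub ((Real.hasDerivAt_exp v).sub_const 1)
    exact h2.congr_deriv (by ring)
  have hmono : MonotoneOn g (Set.Icc 0 u) := by
    apply monotoneOn_of_deriv_nonneg (convex_Icc 0 u)
    · exact fun x _ => (hder x).continuousAt.continuousWithinAt
    · exact fun x _ => (hder x).differentiableAt.differentiableWithinAt
    · intro x _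
      rw [(hder x).deriv]
      have hx1 : (-x + 1) * Real.exp x ≤ Real.exp (-x) * Real.exp x :=
        mul_le_mul_of_nonneg_right (Real.add_one_le_exp (-x)) (Real.exp_pos x).le
      rw [← Real.exp_add] at hx1
      simp only [neg_add_cancel, Real.exp_zero] at hx1
      nlinarith [Real.exp_pos x]
  have h0 : g 0 ≤ g u := hmono (Set.left_mem_Icc.mpr hu) (Set.right_mem_Icc.mpr hu) hu
  simp only [hg, Real.exp_zero, zero_mul, zero_div, sub_zero, sub_self] at h0
  linarith

lemma exp_pair_aux {l x y : ℝ} (hl : 0 ≤ l) (hxy : y ≤ x) :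
    (x - y) * (Real.exp (l * x) - Real.exp (l * y))
      ≤ l * (x - y) ^ 2 * (Real.exp (l * x) + Real.exp (l * y)) / 2 := by
  have hu : 0 ≤ l * (x - y) := mul_nonneg hl (by linarith)
  have hc := exp_core hu
  have hm : 0 ≤ (x - y) * Real.exp (l * y) :=
    mul_nonneg (by linarith) (Real.exp_pos _).le
  have hmul := mul_le_mul_of_nonneg_left hc hm
  have hxe : Real.exp (l * x) = Real.exp (l * (x - y)) * Real.exp (l * y) := by
    rw [← Real.exp_add]; ring_nf
  rw [hxe]
  nlinarith [Real.exp_pos (l * y), Real.exp_pos (l * (x - y))]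

lemma exp_pair {l x y : ℝ} (hl : 0 ≤ l) :
    (x - y) * (Real.exp (l * x) - Real.exp (l * y))
      ≤ l * (x - y) ^ 2 * (Real.exp (l * x) + Real.exp (l * y)) / 2 := by
  rcases le_total y x with h | h
  · exact exp_pair_aux hl h
  · have := exp_pair_aux hl h (l := l)
    nlinarith [this]


lemma row_sum (hN : 0 < N) (i : Fin N) : ∑ j, dmat N a i j = 0 := by
  have hNR : ((N : ℝ)) ≠ 0 := Nat.cast_ne_zero.mpr hN.ne'
  simp only [dmat, Finset.sum_add_distrib, Finset.sum_sub_distrib, ← Finset.sum_div,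
    Finset.sum_const, card_univ, Fintype.card_fin, nsmul_eq_mul]
  rw [Finset.sum_comm]
  field_simp
  ring

lemma col_sum (hN : 0 < N) (j : Fin N) : ∑ i, dmat N a i j = 0 := by
  have hNR : ((N : ℝ)) ≠ 0 := Nat.cast_ne_zero.mpr hN.ne'
  simp only [dmat, Finset.sum_add_distrib, Finset.sum_sub_distrib, ← Finset.sum_div,
    Finset.sum_const, card_univ, Fintype.card_fin, nsmul_eq_mul]
  field_simp
  ring

lemma sd_eq (hN : 0 < N) (π : Equiv.Perm (Fin N)) :
    ∑ i, dmat N a i (π i) = combSum N a π - muA N a := by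
  have hNR : ((N : ℝ)) ≠ 0 := Nat.cast_ne_zero.mpr hN.ne'
  simp only [dmat, Finset.sum_add_distrib, Finset.sum_sub_distrib, ← Finset.sum_div,
    Finset.sum_const, card_univ, Fintype.card_fin, nsmul_eq_mul]
  rw [Equiv.sum_comp π (fun j => ∑ k, a k j), Finset.sum_comm]
  simp only [combSum, muA]
  field_simp
  ring

lemma abs_le_BA (i j : Fin N) : |dmat N a i j| ≤ BA N a := by
  have h1 : |dmat N a i j| ≤ ⨆ j' : Fin N, |dmat N a i j'| :=
    le_ciSup (f := fun j' => |dmat N a i j'|) (Set.Finite.bddAbove (Set.finite_range _)) j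
  exact h1.trans (le_ciSup (f := fun i' => ⨆ j' : Fin N, |dmat N a i' j'|)
    (Set.Finite.bddAbove (Set.finite_range _)) i)

noncomputable def dlt (N : ℕ) (a : Fin N → Fin N → ℝ) (π : Equiv.Perm (Fin N)) (i j : Fin N) : ℝ :=
  dmat N a i (π i) + dmat N a j (π j) - dmat N a i (π j) - dmat N a j (π i)

lemma S_swap (π : Equiv.Perm (Fin N)) (i j : Fin N) :
    ∑ x, dmat N a x ((π * Equiv.swap i j) x) = (∑ x, dmat N a x (π x)) - dlt N a π i j := by
  rcases eq_or_ne i j with rfl | hij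
  · simp [dlt, Equiv.swap_self]
  · have hzero : ∀ x ∈ (univ : Finset (Fin N)), x ∉ ({i, j} : Finset (Fin N)) →
        dmat N a x (π (Equiv.swap i j x)) - dmat N a x (π x) = 0 := by
      intro x _ hx
      simp only [Finset.mem_insert, Finset.mem_singleton, not_or] at hx
      rw [Equiv.swap_apply_of_ne_of_ne hx.1 hx.2, sub_self]
    have h1 : ∑ x, (dmat N a x (π (Equiv.swap i j x)) - dmat N a x (π x))
        = ∑ x ∈ ({i, j} : Finset (Fin N)),
            (dmat N a x (π (Equiv.swap i j x)) - dmat N a x (π x)) :=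
      (Finset.sum_subset (Finset.subset_univ _) hzero).symm
    have h2 : ∑ x, (dmat N a x (π (Equiv.swap i j x)) - dmat N a x (π x)) = - dlt N a π i j := by
      rw [h1, Finset.sum_pair hij, Equiv.swap_apply_left, Equiv.swap_apply_right, dlt]
      ring
    have h3 : ∑ x, dmat N a x ((π * Equiv.swap i j) x)
        = ∑ x, (dmat N a x (π (Equiv.swap i j x)) - dmat N a x (π x)) + ∑ x, dmat N a x (π x) := by
      rw [Finset.sum_sub_distrib]
      simp [Equiv.Perm.mul_apply]
    rw [h3, h2]; ring

lemma dlt_swap (π : Equiv.Perm (Fin N)) (i j : Fin N) :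
    dlt N a (π * Equiv.swap i j) i j = - dlt N a π i j := by
  simp only [dlt, Equiv.Perm.mul_apply, Equiv.swap_apply_left, Equiv.swap_apply_right]
  ring

lemma dlt_sum (hN : 0 < N) (π : Equiv.Perm (Fin N)) :
    ∑ i, ∑ j, dlt N a π i j = 2 * (N : ℝ) * ∑ x, dmat N a x (π x) := by
  have hinner : ∀ i : Fin N, ∑ j, dlt N a π i j
      = (N : ℝ) * dmat N a i (π i) + ∑ x, dmat N a x (π x) := by
    intro i
    simp only [dlt, Finset.sum_add_distrib, Finset.sum_sub_distrib, Finset.sum_const,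
      card_univ, Fintype.card_fin, nsmul_eq_mul]
    rw [Equiv.sum_comp π (fun j => dmat N a i j), row_sum hN i, col_sum hN (π i)]
    ring
  rw [Finset.sum_congr rfl (fun i _ => hinner i), Finset.sum_add_distrib, Finset.sum_const,
    ← Finset.mul_sum, card_univ, Fintype.card_fin, nsmul_eq_mul]
  ring

lemma dlt_sq (π : Equiv.Perm (Fin N)) (i j : Fin N) :
    (dlt N a π i j) ^ 2 ≤ 4 * ((dmat N a i (π i)) ^ 2 + (dmat N a j (π j)) ^ 2
      + (dmat N a i (π j)) ^ 2 + (dmat N a j (π i)) ^ 2) := by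
  set p := dmat N a i (π i); set q := dmat N a j (π j)
  set r := dmat N a i (π j); set s := dmat N a j (π i)
  simp only [dlt]
  nlinarith [sq_nonneg (p - q), sq_nonneg (p + r), sq_nonneg (p + s), sq_nonneg (q + r),
    sq_nonneg (q + s), sq_nonneg (r - s)]
lemma sq_le_BA (i j : Fin N) : (dmat N a i j) ^ 2 ≤ (BA N a) ^ 2 := by
  calc (dmat N a i j) ^ 2 = |dmat N a i j| ^ 2 := (sq_abs _).symm
    _ ≤ (BA N a) ^ 2 := pow_le_pow_left₀ (abs_nonneg _) (abs_le_BA i j) 2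

lemma dlt_sq_sum (hN : 0 < N) (π : Equiv.Perm (Fin N)) :
    ∑ i, ∑ j, (dlt N a π i j) ^ 2
      ≤ 8 * (N : ℝ) ^ 2 * (BA N a) ^ 2 + 8 * ∑ i, ∑ j, (dmat N a i j) ^ 2 := by
  have h1 : ∑ i, ∑ j, (dlt N a π i j) ^ 2
      ≤ ∑ i, ∑ j, (4 * ((dmat N a i (π i)) ^ 2 + (dmat N a j (π j)) ^ 2
        + (dmat N a i (π j)) ^ 2 + (dmat N a j (π i)) ^ 2)) :=
    Finset.sum_le_sum fun i _ => Finset.sum_le_sum fun j _ => dlt_sq π i j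
  refine h1.trans ?_
  have hdiag : ∑ x, (dmat N a x (π x)) ^ 2 ≤ (N : ℝ) * (BA N a) ^ 2 := by
    calc ∑ x, (dmat N a x (π x)) ^ 2 ≤ ∑ _x : Fin N, (BA N a) ^ 2 :=
          Finset.sum_le_sum fun x _ => sq_le_BA x (π x)
      _ = (N : ℝ) * (BA N a) ^ 2 := by
          rw [Finset.sum_const, card_univ, Fintype.card_fin, nsmul_eq_mul]
  have hsplit : ∑ i, ∑ j, (4 * ((dmat N a i (π i)) ^ 2 + (dmat N a j (π j)) ^ 2
        + (dmat N a i (π j)) ^ 2 + (dmat N a j (π i)) ^ 2))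
      = 4 * ((N : ℝ) * ∑ x, (dmat N a x (π x)) ^ 2 + (N : ℝ) * ∑ x, (dmat N a x (π x)) ^ 2
        + (∑ i, ∑ j, (dmat N a i j) ^ 2) + (∑ i, ∑ j, (dmat N a i j) ^ 2)) := by
    have hinner : ∀ i : Fin N, ∑ j, (4 * ((dmat N a i (π i)) ^ 2 + (dmat N a j (π j)) ^ 2
          + (dmat N a i (π j)) ^ 2 + (dmat N a j (π i)) ^ 2))
        = 4 * ((N : ℝ) * (dmat N a i (π i)) ^ 2 + (∑ x, (dmat N a x (π x)) ^ 2)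
          + (∑ j, (dmat N a i j) ^ 2) + (∑ j, (dmat N a j (π i)) ^ 2)) := by
      intro i
      rw [← Finset.mul_sum]
      congr 1
      rw [Finset.sum_add_distrib, Finset.sum_add_distrib, Finset.sum_add_distrib,
        Finset.sum_const, card_univ, Fintype.card_fin, nsmul_eq_mul,
        Equiv.sum_comp π (fun j => (dmat N a i j) ^ 2)]
    rw [Finset.sum_congr rfl (fun i _ => hinner i), ← Finset.mul_sum]
    congr 1
    have hcomm : (∑ x, ∑ j, (dmat N a j x) ^ 2) = ∑ i, ∑ j, (dmat N a i j) ^ 2 :=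
      Finset.sum_comm
    rw [Finset.sum_add_distrib, Finset.sum_add_distrib, Finset.sum_add_distrib,
      Finset.sum_const, card_univ, Fintype.card_fin, nsmul_eq_mul, ← Finset.mul_sum,
      Equiv.sum_comp π (fun y => ∑ j, (dmat N a j y) ^ 2), hcomm]
  rw [hsplit]
  nlinarith [hdiag, Finset.sum_nonneg (fun i (_ : i ∈ univ) =>
    Finset.sum_nonneg (fun j (_ : j ∈ univ) => sq_nonneg (dmat N a i j)))]

lemma deriv_bound (hN2 : 2 ≤ N) {l : ℝ} (hl : 0 ≤ l) :
    ∑ π : Equiv.Perm (Fin N), (∑ x, dmat N a x (π x)) * Real.exp (l * ∑ x, dmat N a x (π x))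
      ≤ l * (2 * (N : ℝ) * (BA N a) ^ 2 + 2 * sigmaA2 N a)
        * ∑ π : Equiv.Perm (Fin N), Real.exp (l * ∑ x, dmat N a x (π x)) := by
  have hN : 0 < N := by omega
  have hN1 : (0 : ℝ) < (N : ℝ) - 1 := by
    have : (2 : ℝ) ≤ (N : ℝ) := by exact_mod_cast hN2
    linarith
  have hNR : (0 : ℝ) < (N : ℝ) := by positivity
  set B := BA N a with hB
  set Sq := ∑ i, ∑ j, (dmat N a i j) ^ 2 with hSq
  have hSq0 : 0 ≤ Sq :=
    Finset.sum_nonneg fun i _ => Finset.sum_nonneg fun j _ => sq_nonneg _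
  set m := ∑ π : Equiv.Perm (Fin N), Real.exp (l * ∑ x, dmat N a x (π x)) with hm
  have hm0 : 0 ≤ m := Finset.sum_nonneg fun π _ => (Real.exp_pos _).le
  -- step 1 : 2N * LHS = ∑_i ∑_j ∑_π dlt * exp
  have hA : 2 * (N : ℝ) * ∑ π : Equiv.Perm (Fin N),
        (∑ x, dmat N a x (π x)) * Real.exp (l * ∑ x, dmat N a x (π x))
      = ∑ i, ∑ j, ∑ π : Equiv.Perm (Fin N),
          dlt N a π i j * Real.exp (l * ∑ x, dmat N a x (π x)) := by
    have h1 : ∀ i : Fin N, ∑ j, ∑ π : Equiv.Perm (Fin N),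
          dlt N a π i j * Real.exp (l * ∑ x, dmat N a x (π x))
        = ∑ π : Equiv.Perm (Fin N), ∑ j,
            dlt N a π i j * Real.exp (l * ∑ x, dmat N a x (π x)) :=
      fun i => Finset.sum_comm
    rw [Finset.sum_congr rfl (fun i _ => h1 i), Finset.sum_comm]
    rw [Finset.mul_sum]
    refine Finset.sum_congr rfl fun π _ => ?_
    simp only [← Finset.sum_mul]
    rw [dlt_sum hN π]
    ring
  -- step 2: per (i,j) symmetrization and bound
  have hij : ∀ i j : Fin N, ∑ π : Equiv.Perm (Fin N),
        dlt N a π i j * Real.exp (l * ∑ x, dmat N a x (π x))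
      ≤ l / 2 * ∑ π : Equiv.Perm (Fin N),
          (dlt N a π i j) ^ 2 * Real.exp (l * ∑ x, dmat N a x (π x)) := by
    intro i j
    have hre : ∑ π : Equiv.Perm (Fin N),
          dlt N a π i j * Real.exp (l * ∑ x, dmat N a x (π x))
        = ∑ π : Equiv.Perm (Fin N), - dlt N a π i j
            * Real.exp (l * ((∑ x, dmat N a x (π x)) - dlt N a π i j)) := by
      have := Equiv.sum_comp (Equiv.mulRight (Equiv.swap i j))
        (fun π : Equiv.Perm (Fin N) => dlt N a π i j * Real.exp (l * ∑ x, dmat N a x (π x)))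
      rw [← this]
      refine Finset.sum_congr rfl fun π _ => ?_
      simp only [Equiv.coe_mulRight]
      rw [dlt_swap, S_swap]
    have h2 : 2 * ∑ π : Equiv.Perm (Fin N),
          dlt N a π i j * Real.exp (l * ∑ x, dmat N a x (π x))
        = ∑ π : Equiv.Perm (Fin N), dlt N a π i j
            * (Real.exp (l * ∑ x, dmat N a x (π x))
              - Real.exp (l * ((∑ x, dmat N a x (π x)) - dlt N a π i j))) := by
      rw [two_mul]
      nth_rewrite 2 [hre]
      rw [← Finset.sum_add_distrib]
      refine Finset.sum_congr rfl fun π _ => ?_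
      ring
    have h3 : ∑ π : Equiv.Perm (Fin N), dlt N a π i j
          * (Real.exp (l * ∑ x, dmat N a x (π x))
            - Real.exp (l * ((∑ x, dmat N a x (π x)) - dlt N a π i j)))
        ≤ ∑ π : Equiv.Perm (Fin N), l * (dlt N a π i j) ^ 2
            * (Real.exp (l * ∑ x, dmat N a x (π x))
              + Real.exp (l * ((∑ x, dmat N a x (π x)) - dlt N a π i j))) / 2 := by
      refine Finset.sum_le_sum fun π _ => ?_
      have := exp_pair (l := l) (x := ∑ x, dmat N a x (π x))
        (y := (∑ x, dmat N a x (π x)) - dlt N a π i j) hl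
      have hd : (∑ x, dmat N a x (π x)) - ((∑ x, dmat N a x (π x)) - dlt N a π i j)
          = dlt N a π i j := by ring
      rw [hd] at this
      exact this
    have h4 : ∑ π : Equiv.Perm (Fin N), (dlt N a π i j) ^ 2
          * Real.exp (l * ((∑ x, dmat N a x (π x)) - dlt N a π i j))
        = ∑ π : Equiv.Perm (Fin N), (dlt N a π i j) ^ 2
            * Real.exp (l * ∑ x, dmat N a x (π x)) := by
      have := Equiv.sum_comp (Equiv.mulRight (Equiv.swap i j))
        (fun π : Equiv.Perm (Fin N) => (dlt N a π i j) ^ 2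
          * Real.exp (l * ((∑ x, dmat N a x (π x)) - dlt N a π i j)))
      rw [← this]
      refine Finset.sum_congr rfl fun π _ => ?_
      simp only [Equiv.coe_mulRight]
      rw [dlt_swap, S_swap, neg_sq]
      congr 2
      ring
    have h5 : ∑ π : Equiv.Perm (Fin N), l * (dlt N a π i j) ^ 2
          * (Real.exp (l * ∑ x, dmat N a x (π x))
            + Real.exp (l * ((∑ x, dmat N a x (π x)) - dlt N a π i j))) / 2
        = l * ∑ π : Equiv.Perm (Fin N), (dlt N a π i j) ^ 2
            * Real.exp (l * ∑ x, dmat N a x (π x)) := by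
      have expand : ∀ π : Equiv.Perm (Fin N), l * (dlt N a π i j) ^ 2
            * (Real.exp (l * ∑ x, dmat N a x (π x))
              + Real.exp (l * ((∑ x, dmat N a x (π x)) - dlt N a π i j))) / 2
          = l / 2 * ((dlt N a π i j) ^ 2 * Real.exp (l * ∑ x, dmat N a x (π x)))
            + l / 2 * ((dlt N a π i j) ^ 2
              * Real.exp (l * ((∑ x, dmat N a x (π x)) - dlt N a π i j))) := by
        intro π; ring
      rw [Finset.sum_congr rfl fun π _ => expand π, Finset.sum_add_distrib,
        ← Finset.mul_sum, ← Finset.mul_sum, h4]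
      ring
    have h6 := h2.trans_le (h3.trans_eq h5)
    linarith
  -- step 3: combine
  have hsum : ∑ i, ∑ j, ∑ π : Equiv.Perm (Fin N),
        dlt N a π i j * Real.exp (l * ∑ x, dmat N a x (π x))
      ≤ l / 2 * ∑ π : Equiv.Perm (Fin N),
          (8 * (N : ℝ) ^ 2 * B ^ 2 + 8 * Sq) * Real.exp (l * ∑ x, dmat N a x (π x)) := by
    have step1 : ∑ i, ∑ j, ∑ π : Equiv.Perm (Fin N),
          dlt N a π i j * Real.exp (l * ∑ x, dmat N a x (π x))
        ≤ ∑ i, ∑ j, (l / 2 * ∑ π : Equiv.Perm (Fin N),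
            (dlt N a π i j) ^ 2 * Real.exp (l * ∑ x, dmat N a x (π x))) :=
      Finset.sum_le_sum fun i _ => Finset.sum_le_sum fun j _ => hij i j
    refine step1.trans ?_
    have step2 : ∑ i, ∑ j, (l / 2 * ∑ π : Equiv.Perm (Fin N),
          (dlt N a π i j) ^ 2 * Real.exp (l * ∑ x, dmat N a x (π x)))
        = l / 2 * ∑ π : Equiv.Perm (Fin N),
            (∑ i, ∑ j, (dlt N a π i j) ^ 2) * Real.exp (l * ∑ x, dmat N a x (π x)) := by
      simp only [← Finset.mul_sum]
      congr 1
      have h1 : ∀ i : Fin N, ∑ j, ∑ π : Equiv.Perm (Fin N),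
            (dlt N a π i j) ^ 2 * Real.exp (l * ∑ x, dmat N a x (π x))
          = ∑ π : Equiv.Perm (Fin N), ∑ j,
              (dlt N a π i j) ^ 2 * Real.exp (l * ∑ x, dmat N a x (π x)) :=
        fun i => Finset.sum_comm
      rw [Finset.sum_congr rfl (fun i _ => h1 i), Finset.sum_comm]
      refine Finset.sum_congr rfl fun π _ => ?_
      simp only [← Finset.sum_mul]
    rw [step2]
    have hle2 : 0 ≤ l / 2 := by linarith
    refine mul_le_mul_of_nonneg_left ?_ hle2
    refine Finset.sum_le_sum fun π _ => ?_
    exact mul_le_mul_of_nonneg_right (dlt_sq_sum hN π) (Real.exp_pos _).le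
  -- step 4: arithmetic
  have hSqN : Sq ≤ (N : ℝ) * sigmaA2 N a := by
    have hs : sigmaA2 N a = Sq / ((N : ℝ) - 1) := rfl
    rw [hs, ← mul_div_assoc, le_div_iff₀ hN1]
    nlinarith
  have hfinal : l / 2 * ∑ π : Equiv.Perm (Fin N),
        (8 * (N : ℝ) ^ 2 * B ^ 2 + 8 * Sq) * Real.exp (l * ∑ x, dmat N a x (π x))
      ≤ 2 * (N : ℝ) * (l * (2 * (N : ℝ) * B ^ 2 + 2 * sigmaA2 N a) * m) := by
    rw [← Finset.mul_sum, ← hm]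
    have hc : (8 * (N : ℝ) ^ 2 * B ^ 2 + 8 * Sq) ≤ 8 * (N : ℝ) ^ 2 * B ^ 2
        + 8 * ((N : ℝ) * sigmaA2 N a) := by linarith
    have := mul_le_mul_of_nonneg_right hc hm0
    nlinarith [this, hl, mul_nonneg hl hm0]
  have hres := (hA.symm ▸ hsum : 2 * (N : ℝ) * ∑ π : Equiv.Perm (Fin N),
      (∑ x, dmat N a x (π x)) * Real.exp (l * ∑ x, dmat N a x (π x))
        ≤ l / 2 * ∑ π : Equiv.Perm (Fin N),
          (8 * (N : ℝ) ^ 2 * B ^ 2 + 8 * Sq) * Real.exp (l * ∑ x, dmat N a x (π x)))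
  have h2N : (0 : ℝ) < 2 * (N : ℝ) := by positivity
  have := hres.trans hfinal
  exact le_of_mul_le_mul_left this h2N

lemma mgf_le (hN2 : 2 ≤ N) {l : ℝ} (hl : 0 ≤ l) :
    ∑ π : Equiv.Perm (Fin N), Real.exp (l * ∑ x, dmat N a x (π x))
      ≤ (Nat.factorial N : ℝ)
        * Real.exp ((2 * (N : ℝ) * (BA N a) ^ 2 + 2 * sigmaA2 N a) * l ^ 2 / 2) := by
  set C := 2 * (N : ℝ) * (BA N a) ^ 2 + 2 * sigmaA2 N a with hC
  set m : ℝ → ℝ := fun u => ∑ π : Equiv.Perm (Fin N),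
    Real.exp (u * ∑ x, dmat N a x (π x)) with hm
  have hder : ∀ u, HasDerivAt m (∑ π : Equiv.Perm (Fin N),
      (∑ x, dmat N a x (π x)) * Real.exp (u * ∑ x, dmat N a x (π x))) u := by
    intro u
    apply HasDerivAt.fun_sum
    intro π _
    have h1 : HasDerivAt (fun u : ℝ => u * ∑ x, dmat N a x (π x))
        (∑ x, dmat N a x (π x)) u := hasDerivAt_mul_const _
    have h2 := (Real.hasDerivAt_exp (u * ∑ x, dmat N a x (π x))).comp u h1
    exact h2.congr_deriv (by ring)
  set g : ℝ → ℝ := fun u => m u * Real.exp (-(C * u ^ 2 / 2)) with hg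
  have hgder : ∀ u, HasDerivAt g
      ((∑ π : Equiv.Perm (Fin N), (∑ x, dmat N a x (π x))
          * Real.exp (u * ∑ x, dmat N a x (π x))) * Real.exp (-(C * u ^ 2 / 2))
        + m u * (Real.exp (-(C * u ^ 2 / 2)) * (-(C * u)))) u := by
    intro u
    have h2 : HasDerivAt (fun u : ℝ => u ^ 2) (2 * u) u := by
      simpa using hasDerivAt_pow 2 u
    have h3 : HasDerivAt (fun u : ℝ => -(C * u ^ 2 / 2)) (-(C * u)) u := by
      have := ((h2.const_mul C).div_const 2).neg
      exact this.congr_deriv (by ring)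
    have h4 := (Real.hasDerivAt_exp (-(C * u ^ 2 / 2))).comp u h3
    exact (hder u).mul h4
  have hanti : AntitoneOn g (Set.Icc 0 l) := by
    apply antitoneOn_of_deriv_nonpos (convex_Icc 0 l)
    · exact fun x _ => (hgder x).continuousAt.continuousWithinAt
    · intro x _
      exact (hgder x).differentiableAt.differentiableWithinAt
    · intro x hx
      rw [interior_Icc] at hx
      rw [(hgder x).deriv]
      have hd := deriv_bound (a := a) hN2 hx.1.le
      have hE : (0 : ℝ) < Real.exp (-(C * x ^ 2 / 2)) := Real.exp_pos _
      have hmul := mul_le_mul_of_nonneg_right hd hE.le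
      have hCc : x * C * (∑ π : Equiv.Perm (Fin N),
          Real.exp (x * ∑ x', dmat N a x' (π x'))) = C * x * m x := by
        rw [hm]; ring
      rw [hCc] at hmul
      nlinarith [hmul]
  have hgl : g l ≤ g 0 :=
    hanti (Set.left_mem_Icc.mpr hl) (Set.right_mem_Icc.mpr hl) hl
  have hg0 : g 0 = (Nat.factorial N : ℝ) := by
    simp [hg, hm, Real.exp_zero, Finset.card_univ, Fintype.card_perm, Fintype.card_fin]
  rw [hg0] at hgl
  have hmul := mul_le_mul_of_nonneg_right hgl (Real.exp_pos (C * l ^ 2 / 2)).le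
  have hgll : g l * Real.exp (C * l ^ 2 / 2) = m l := by
    rw [hg, mul_assoc, ← Real.exp_add]
    simp
  rw [hgll] at hmul
  exact hmul


end CombHoeffAux

/-- Combinatorial Hoeffding inequality, version I. -/
theorem combinatorial_hoeffding_I
    (N : ℕ) (hN : 1 ≤ N) (a : Fin N → Fin N → ℝ) (t : ℝ) (ht : 0 ≤ t) :
    permProb N (fun π => t ≤ combSum N a π - muA N a)
      ≤ Real.exp (-(t ^ 2) / (4 * (N : ℝ) * (BA N a) ^ 2 + 4 * sigmaA2 N a)) := by
  have hN0 : 0 < N := hN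
  have hfac : (0 : ℝ) < (Nat.factorial N : ℝ) := by
    exact_mod_cast Nat.factorial_pos N
  have hprob_le_one : permProb N (fun π => t ≤ combSum N a π - muA N a) ≤ 1 := by
    rw [permProb, div_le_one hfac]
    calc (∑ π : Equiv.Perm (Fin N), if t ≤ combSum N a π - muA N a then (1 : ℝ) else 0)
        ≤ ∑ _π : Equiv.Perm (Fin N), (1 : ℝ) :=
          Finset.sum_le_sum fun π _ => by split <;> norm_num
      _ = (Nat.factorial N : ℝ) := by
          simp [Finset.card_univ, Fintype.card_perm, Fintype.card_fin]
  by_cases hB : BA N a = 0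
  · have hd0 : ∀ i j, dmat N a i j = 0 := fun i j =>
      abs_eq_zero.mp (le_antisymm (hB ▸ abs_le_BA i j) (abs_nonneg _))
    have hs0 : sigmaA2 N a = 0 := by simp [sigmaA2, hd0]
    have hden : 4 * (N : ℝ) * (BA N a) ^ 2 + 4 * sigmaA2 N a = 0 := by
      rw [hB, hs0]; ring
    rw [hden, div_zero, Real.exp_zero]
    exact hprob_le_one
  · have i0 : Fin N := ⟨0, hN0⟩
    have hB0 : 0 ≤ BA N a := (abs_nonneg _).trans (abs_le_BA i0 i0)
    have hBpos : 0 < BA N a := lt_of_le_of_ne hB0 (Ne.symm hB)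
    have hN2 : 2 ≤ N := by
      by_contra hcon
      have hN1 : N = 1 := by omega
      subst hN1
      apply hB
      have hd1 : dmat 1 a default default = 0 := by
        simp [dmat, Fin.sum_univ_one]
      rw [BA, ciSup_unique, ciSup_unique, hd1, abs_zero]
    have hN1R : (0 : ℝ) < (N : ℝ) - 1 := by
      have : (2 : ℝ) ≤ (N : ℝ) := by exact_mod_cast hN2
      linarith
    have hs0 : 0 ≤ sigmaA2 N a :=
      div_nonneg (Finset.sum_nonneg fun i _ => Finset.sum_nonneg fun j _ => sq_nonneg _)
        hN1R.le
    set C := 2 * (N : ℝ) * (BA N a) ^ 2 + 2 * sigmaA2 N a with hC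
    have hCpos : 0 < C := by
      have : (0:ℝ) < (N:ℝ) := by exact_mod_cast hN0
      nlinarith
    set l := t / C with hldef
    have hl : 0 ≤ l := div_nonneg ht hCpos.le
    -- rewrite the event
    have hev : ∀ π : Equiv.Perm (Fin N), combSum N a π - muA N a = ∑ x, dmat N a x (π x) :=
      fun π => (sd_eq hN0 π).symm
    have hnum : (∑ π : Equiv.Perm (Fin N),
          if t ≤ combSum N a π - muA N a then (1 : ℝ) else 0)
        ≤ Real.exp (-(l * t)) * ∑ π : Equiv.Perm (Fin N),
            Real.exp (l * ∑ x, dmat N a x (π x)) := by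
      rw [Finset.mul_sum]
      refine Finset.sum_le_sum fun π _ => ?_
      rw [← Real.exp_add]
      split
      · rename_i hle
        rw [hev π] at hle
        have : (0:ℝ) ≤ -(l * t) + l * ∑ x, dmat N a x (π x) := by
          have := mul_le_mul_of_nonneg_left hle hl
          linarith
        calc (1:ℝ) = Real.exp 0 := Real.exp_zero.symm
          _ ≤ _ := Real.exp_le_exp.mpr this
      · exact (Real.exp_pos _).le
    have hmgf := mgf_le (a := a) hN2 hl
    have hnum2 : (∑ π : Equiv.Perm (Fin N),
          if t ≤ combSum N a π - muA N a then (1 : ℝ) else 0)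
        ≤ Real.exp (-(l * t)) * ((Nat.factorial N : ℝ) * Real.exp (C * l ^ 2 / 2)) :=
      hnum.trans (mul_le_mul_of_nonneg_left hmgf (Real.exp_pos _).le)
    rw [permProb, div_le_iff₀ hfac]
    refine hnum2.trans_eq ?_
    have hexp : -(l * t) + C * l ^ 2 / 2 = -(t ^ 2) / (4 * (N : ℝ) * (BA N a) ^ 2
        + 4 * sigmaA2 N a) := by
      have h2C : 4 * (N : ℝ) * (BA N a) ^ 2 + 4 * sigmaA2 N a = 2 * C := by
        rw [hC]; ring
      rw [h2C, hldef]
      field_simp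
      ring
    rw [← hexp, Real.exp_add]
    ring
end
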